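/- arXiv:2404.11693 — 2 statements merged into one kernel-verified Lean document; each statement's English description precedes it below -/
import Mathlib

section
/- Assume (φ1)–(φ4) and (V1)–(V5), and let q be a heteroclinic solution of problem (P). Then there exist constants β₁, β₂, β₃, β₄ > 0 such that 0 < q'(t) ≤ β₁ e^{−β₂ t} for all t ≥ 0 and 0 < q'(t) ≤ β₃ e^{β₄ t} for all t ≤ 0. -/
open Real Filter Set MeasureTheory

noncomputable def Phi (φ : ℝ → ℝ) (t : ℝ) : ℝ := ∫ s in (0:ℝ)..|t|, s * φ s

section PhiLemmas

variable {φ : ℝ → ℝ}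

lemma phi_nonneg (hc : ContinuousOn φ (Set.Ici 0)) (hpos : ∀ t > 0, 0 < φ t) :
    ∀ x, 0 ≤ x → 0 ≤ φ x := by
  intro x hx
  rcases eq_or_lt_of_le hx with h | h
  · subst h
    have ht : Tendsto φ (nhdsWithin 0 (Set.Ioi 0)) (nhds (φ 0)) :=
      (hc 0 self_mem_Ici).mono_left (nhdsWithin_mono _ Ioi_subset_Ici_self)
    exact ge_of_tendsto ht (eventually_nhdsWithin_of_forall fun y hy => (hpos y hy).le)
  · exact (hpos x h).le

lemma intervalIntegrable_xphi (hc : ContinuousOn φ (Set.Ici 0)) {b : ℝ} (hb : 0 ≤ b) :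
    IntervalIntegrable (fun x => x * φ x) volume 0 b := by
  apply ContinuousOn.intervalIntegrable
  apply ContinuousOn.mul continuousOn_id
  apply hc.mono
  rw [uIcc_of_le hb]
  exact fun x hx => hx.1

lemma Phi_zero : Phi φ 0 = 0 := by simp [Phi]

lemma Phi_neg (t : ℝ) : Phi φ (-t) = Phi φ t := by simp [Phi]

lemma Phi_eq_of_nonneg {t : ℝ} (ht : 0 ≤ t) : Phi φ t = ∫ x in (0:ℝ)..t, x * φ x := by
  rw [Phi, abs_of_nonneg ht]

lemma Phi_nonneg (hc : ContinuousOn φ (Set.Ici 0)) (hpos : ∀ t > 0, 0 < φ t) (t : ℝ) :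
    0 ≤ Phi φ t := by
  rw [Phi]
  apply intervalIntegral.integral_nonneg (abs_nonneg t)
  intro u hu
  exact mul_nonneg hu.1 (phi_nonneg hc hpos u hu.1)

lemma Phi_pos (hc : ContinuousOn φ (Set.Ici 0)) (hpos : ∀ t > 0, 0 < φ t) {t : ℝ} (ht : 0 < t) :
    0 < Phi φ t := by
  rw [Phi_eq_of_nonneg ht.le]
  apply intervalIntegral.intervalIntegral_pos_of_pos_on (intervalIntegrable_xphi hc ht.le) _ ht
  intro x hx
  exact mul_pos hx.1 (hpos x hx.1)

lemma hasDerivAt_Phi (hc : ContinuousOn φ (Set.Ici 0)) (hm : MonotoneOn φ (Set.Ici 0))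
    (hpos : ∀ t > 0, 0 < φ t) (s : ℝ) : HasDerivAt (Phi φ) (s * φ |s|) s := by
  have hF : ∀ b : ℝ, 0 < b → HasDerivAt (fun u => ∫ x in (0:ℝ)..u, x * φ x) (b * φ b) b := by
    intro b hb
    have hci : ContinuousOn (fun x => x * φ x) (Set.Ioi 0) :=
      continuousOn_id.mul (hc.mono Ioi_subset_Ici_self)
    exact intervalIntegral.integral_hasDerivAt_right (intervalIntegrable_xphi hc hb.le)
      (ContinuousOn.stronglyMeasurableAtFilter isOpen_Ioi hci b hb)
      (hci.continuousAt (Ioi_mem_nhds hb))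
  rcases lt_trichotomy s 0 with hneg | hzero | hsp
  · have h1 := (hF (-s) (by linarith)).comp s (hasDerivAt_neg s)
    have he : Phi φ =ᶠ[nhds s] ((fun u => ∫ x in (0:ℝ)..u, x * φ x) ∘ fun t : ℝ => -t) := by
      filter_upwards [isOpen_Iio.eventually_mem hneg] with t (ht : t < 0)
      simp only [Function.comp, Phi, abs_of_nonpos ht.le]
    have := h1.congr_of_eventuallyEq he
    refine this.congr_deriv ?_
    rw [abs_of_nonpos hneg.le]; ring
  · subst hzero
    rw [hasDerivAt_iff_tendsto_slope]
    have hb : ∀ᶠ t in nhdsWithin (0:ℝ) {(0:ℝ)}ᶜ, ‖slope (Phi φ) 0 t‖ ≤ |t| * φ 1 := by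
      filter_upwards [mem_nhdsWithin_of_mem_nhds (Metric.ball_mem_nhds (0:ℝ) one_pos),
        self_mem_nhdsWithin] with t ht hne
      have ht1 : |t| < 1 := by simpa [Real.dist_eq] using ht
      have hb1 : Phi φ t ≤ |t| * (|t| * φ 1) := by
        rw [Phi]
        have := intervalIntegral.integral_mono_on (abs_nonneg t)
          (intervalIntegrable_xphi hc (abs_nonneg t)) intervalIntegrable_const
          (g := fun _ => |t| * φ 1) ?_
        · simpa [mul_comm] using this
        · intro x hx
          have hx1 : φ x ≤ φ 1 := hm (mem_Ici.2 hx.1) (mem_Ici.2 zero_le_one)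
            (le_trans hx.2 ht1.le)
          exact mul_le_mul hx.2 hx1 (phi_nonneg hc hpos x hx.1) (abs_nonneg t)
      have h0 : 0 ≤ Phi φ t := Phi_nonneg hc hpos t
      have hane : |t| ≠ 0 := by simpa [abs_eq_zero] using hne
      rw [slope_def_field]
      simp only [Phi_zero, sub_zero]
      rw [Real.norm_eq_abs, abs_div, abs_of_nonneg h0]
      rw [div_le_iff₀ (lt_of_le_of_ne (abs_nonneg t) (Ne.symm hane))]
      calc Phi φ t ≤ |t| * (|t| * φ 1) := hb1
        _ = |t| * φ 1 * |t| := by ring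
    have ha : Tendsto (fun t : ℝ => |t| * φ 1) (nhdsWithin (0:ℝ) {(0:ℝ)}ᶜ) (nhds 0) := by
      have : Tendsto (fun t : ℝ => |t| * φ 1) (nhds 0) (nhds (|0| * φ 1)) :=
        (continuous_abs.mul continuous_const).tendsto 0
      simpa using this.mono_left nhdsWithin_le_nhds
    simpa using squeeze_zero_norm' hb ha
  · have he : Phi φ =ᶠ[nhds s] (fun u => ∫ x in (0:ℝ)..u, x * φ x) := by
      filter_upwards [isOpen_Ioi.eventually_mem hsp] with t (ht : 0 < t)
      simp only [Phi, abs_of_pos ht]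
    have := (hF s hsp).congr_of_eventuallyEq he
    rwa [abs_of_pos hsp]

lemma Phi_continuous (hc : ContinuousOn φ (Set.Ici 0)) (hm : MonotoneOn φ (Set.Ici 0))
    (hpos : ∀ t > 0, 0 < φ t) : Continuous (Phi φ) :=
  continuous_iff_continuousAt.2 fun s => (hasDerivAt_Phi hc hm hpos s).continuousAt

lemma Phi_bounds (hc : ContinuousOn φ (Set.Ici 0)) {c₁ c₂ δ₀ r : ℝ}
    (hc₁ : 0 < c₁) (hc₂ : 0 < c₂) (hr : 1 < r)
    (h3 : ∀ t : ℝ, 0 < t → t ≤ δ₀ → c₁ * t ^ (r - 1) ≤ φ t * t ∧ φ t * t ≤ c₂ * t ^ (r - 1))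
    {s : ℝ} (hs0 : 0 ≤ s) (hsδ : s ≤ δ₀) :
    c₁ / r * s ^ r ≤ Phi φ s ∧ Phi φ s ≤ c₂ / r * s ^ r := by
  have hr0 : (0:ℝ) < r := by linarith
  rcases eq_or_lt_of_le hs0 with h | h
  · subst h
    simp [Phi_zero, Real.zero_rpow (ne_of_gt hr0)]
  · have hint := intervalIntegrable_xphi hc hs0
    have hrint : IntervalIntegrable (fun x : ℝ => x ^ (r - 1)) volume 0 s :=
      intervalIntegral.intervalIntegrable_rpow (Or.inl (by linarith))
    have hval : ∀ c : ℝ, ∫ x in (0:ℝ)..s, c * x ^ (r - 1) = c / r * s ^ r := by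
      intro c
      rw [intervalIntegral.integral_const_mul, integral_rpow (Or.inl (by linarith))]
      rw [Real.zero_rpow (by linarith : r - 1 + 1 ≠ 0)]
      rw [show r - 1 + 1 = r by ring]
      ring
    constructor
    · rw [Phi_eq_of_nonneg hs0, ← hval c₁]
      apply intervalIntegral.integral_mono_on hs0 (hrint.const_mul c₁) hint
      intro x hx
      rcases eq_or_lt_of_le hx.1 with hx0 | hx0
      · simp [← hx0, Real.zero_rpow (by linarith : r - 1 ≠ 0)]
      · rw [mul_comm x (φ x)]
        exact (h3 x hx0 (le_trans hx.2 hsδ)).1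
    · rw [Phi_eq_of_nonneg hs0, ← hval c₂]
      apply intervalIntegral.integral_mono_on hs0 hint (hrint.const_mul c₂)
      intro x hx
      rcases eq_or_lt_of_le hx.1 with hx0 | hx0
      · simp [← hx0, Real.zero_rpow (by linarith : r - 1 ≠ 0)]
      · rw [mul_comm x (φ x)]
        exact (h3 x hx0 (le_trans hx.2 hsδ)).2

end PhiLemmas

noncomputable def Wfn (φ : ℝ → ℝ) (s : ℝ) : ℝ := φ |s| * s * s - Phi φ s

section WfnLemmas
variable {φ : ℝ → ℝ}

lemma Wfn_zero : Wfn φ 0 = 0 := by simp [Wfn, Phi_zero]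

lemma Wfn_neg (s : ℝ) : Wfn φ (-s) = Wfn φ s := by
  simp only [Wfn, abs_neg, Phi_neg]; ring

lemma hasDerivAt_Wfn (hφC1 : ContDiffOn ℝ 1 φ (Set.Ioi 0))
    (hc : ContinuousOn φ (Set.Ici 0)) (hm : MonotoneOn φ (Set.Ici 0))
    (hpos : ∀ t > 0, 0 < φ t) (s : ℝ) :
    HasDerivAt (Wfn φ) (s * deriv (fun x => φ x * x) |s|) s := by
  have hPos : ∀ s : ℝ, 0 < s → HasDerivAt (Wfn φ) (s * deriv (fun x => φ x * x) s) s := by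
    intro s hsp
    have hd : DifferentiableAt ℝ φ s :=
      ((hφC1.differentiableOn one_ne_zero).differentiableAt (Ioi_mem_nhds hsp))
    have hg : HasDerivAt (fun x => φ x * x) (deriv (fun x => φ x * x) s) s :=
      (hd.mul differentiableAt_id).hasDerivAt
    have hW : HasDerivAt (fun t => φ t * t * t - Phi φ t)
        (deriv (fun x => φ x * x) s * s + (φ s * s) * 1 - s * φ |s|) s :=
      (hg.mul (hasDerivAt_id s)).sub (hasDerivAt_Phi hc hm hpos s)
    have he : Wfn φ =ᶠ[nhds s] fun t => φ t * t * t - Phi φ t := by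
      filter_upwards [isOpen_Ioi.eventually_mem hsp] with t (ht : 0 < t)
      simp only [Wfn, abs_of_pos ht]
    have := hW.congr_of_eventuallyEq he
    rw [abs_of_pos hsp] at this
    exact this.congr_deriv (by ring)
  rcases lt_trichotomy s 0 with hneg | hzero | hsp
  · have h1 := (hPos (-s) (by linarith)).comp s (hasDerivAt_neg s)
    have heq : Wfn φ ∘ (fun t : ℝ => -t) = Wfn φ := funext fun t => Wfn_neg t
    rw [heq] at h1
    refine h1.congr_deriv ?_
    rw [abs_of_neg hneg]; ring
  · subst hzero
    have h1 : HasDerivAt (fun t : ℝ => φ |t| * t * t) 0 0 := by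
      rw [hasDerivAt_iff_tendsto_slope]
      have hb : ∀ᶠ t in nhdsWithin (0:ℝ) {(0:ℝ)}ᶜ,
          ‖slope (fun t : ℝ => φ |t| * t * t) 0 t‖ ≤ φ 1 * |t| := by
        filter_upwards [mem_nhdsWithin_of_mem_nhds (Metric.ball_mem_nhds (0:ℝ) one_pos),
          self_mem_nhdsWithin] with t ht hne
        have ht1 : |t| < 1 := by simpa [Real.dist_eq] using ht
        have hne' : t ≠ 0 := hne
        rw [slope_def_field]
        simp only [abs_zero, mul_zero, zero_mul, sub_zero]
        rw [mul_div_assoc, div_self hne', mul_one]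
        rw [Real.norm_eq_abs, abs_mul]
        have h1 : |(φ |t|)| = φ |t| := abs_of_nonneg (phi_nonneg hc hpos _ (abs_nonneg t))
        rw [h1]
        exact mul_le_mul_of_nonneg_right
          (hm (mem_Ici.2 (abs_nonneg t)) (mem_Ici.2 zero_le_one) ht1.le) (abs_nonneg t)
      have ha : Tendsto (fun t : ℝ => φ 1 * |t|) (nhdsWithin (0:ℝ) {(0:ℝ)}ᶜ) (nhds 0) := by
        have : Tendsto (fun t : ℝ => φ 1 * |t|) (nhds 0) (nhds (φ 1 * |0|)) :=
          (continuous_const.mul continuous_abs).tendsto 0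
        simpa using this.mono_left nhdsWithin_le_nhds
      simpa using squeeze_zero_norm' hb ha
    have h2 := h1.sub (hasDerivAt_Phi hc hm hpos 0)
    have : (fun t : ℝ => φ |t| * t * t - Phi φ t) = Wfn φ := rfl
    have h2' : HasDerivAt (Wfn φ) (0 - 0 * φ |0|) 0 := h2
    exact h2'.congr_deriv (by simp)
  · rw [abs_of_pos hsp]; exact hPos s hsp

lemma Wfn_continuous (hφC1 : ContDiffOn ℝ 1 φ (Set.Ioi 0))
    (hc : ContinuousOn φ (Set.Ici 0)) (hm : MonotoneOn φ (Set.Ici 0))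
    (hpos : ∀ t > 0, 0 < φ t) : Continuous (Wfn φ) :=
  continuous_iff_continuousAt.2 fun s => (hasDerivAt_Wfn hφC1 hc hm hpos s).continuousAt

lemma Wfn_abs (s : ℝ) : Wfn φ |s| = Wfn φ s := by
  rcases abs_choice s with h | h
  · rw [h]
  · rw [h, Wfn_neg]

lemma Wfn_lower (hφC1 : ContDiffOn ℝ 1 φ (Set.Ioi 0))
    (hc : ContinuousOn φ (Set.Ici 0)) (hm : MonotoneOn φ (Set.Ici 0))
    (hpos : ∀ t > 0, 0 < φ t) {l : ℝ}
    (hl2 : ∀ t > 0, l - 1 ≤ deriv (fun s => φ s * s) t / φ t)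
    {s : ℝ} (hs : 0 ≤ s) : (l - 1) * Phi φ s ≤ Wfn φ s := by
  have key : MonotoneOn (fun s => Wfn φ s - (l - 1) * Phi φ s) (Set.Ici 0) := by
    apply monotoneOn_of_deriv_nonneg (convex_Ici 0)
    · exact ((Wfn_continuous hφC1 hc hm hpos).sub
        (continuous_const.mul (Phi_continuous hc hm hpos))).continuousOn
    · intro x hx
      rw [interior_Ici] at hx
      exact ((hasDerivAt_Wfn hφC1 hc hm hpos x).sub
        ((hasDerivAt_Phi hc hm hpos x).const_mul (l - 1))).differentiableAt.differentiableWithinAt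
    · intro x hx
      rw [interior_Ici] at hx
      have hd : deriv (fun s => Wfn φ s - (l - 1) * Phi φ s) x
          = x * deriv (fun x => φ x * x) |x| - (l - 1) * (x * φ |x|) := ((hasDerivAt_Wfn hφC1 hc hm hpos x).sub
        ((hasDerivAt_Phi hc hm hpos x).const_mul (l - 1))).deriv
      rw [hd, abs_of_pos hx]
      have h1 : (l - 1) * φ x ≤ deriv (fun s => φ s * s) x :=
        (le_div_iff₀ (hpos x hx)).1 (hl2 x hx)
      have hx' : (0:ℝ) < x := hx
      nlinarith [mul_le_mul_of_nonneg_left h1 hx'.le]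
  have h2 := key self_mem_Ici (mem_Ici.2 hs) hs
  simp only [Wfn_zero, Phi_zero, mul_zero, sub_zero] at h2
  linarith

lemma Wfn_upper (hφC1 : ContDiffOn ℝ 1 φ (Set.Ioi 0))
    (hc : ContinuousOn φ (Set.Ici 0)) (hm : MonotoneOn φ (Set.Ici 0))
    (hpos : ∀ t > 0, 0 < φ t) {m : ℝ}
    (hm2 : ∀ t > 0, deriv (fun s => φ s * s) t / φ t ≤ m - 1)
    {s : ℝ} (hs : 0 ≤ s) : Wfn φ s ≤ (m - 1) * Phi φ s := by
  have key : MonotoneOn (fun s => (m - 1) * Phi φ s - Wfn φ s) (Set.Ici 0) := by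
    apply monotoneOn_of_deriv_nonneg (convex_Ici 0)
    · exact ((continuous_const.mul (Phi_continuous hc hm hpos)).sub
        (Wfn_continuous hφC1 hc hm hpos)).continuousOn
    · intro x hx
      rw [interior_Ici] at hx
      exact (((hasDerivAt_Phi hc hm hpos x).const_mul (m - 1)).sub
        (hasDerivAt_Wfn hφC1 hc hm hpos x)).differentiableAt.differentiableWithinAt
    · intro x hx
      rw [interior_Ici] at hx
      have hd : deriv (fun s => (m - 1) * Phi φ s - Wfn φ s) x
          = (m - 1) * (x * φ |x|) - x * deriv (fun x => φ x * x) |x| := (((hasDerivAt_Phi hc hm hpos x).const_mul (m - 1)).sub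
        (hasDerivAt_Wfn hφC1 hc hm hpos x)).deriv
      rw [hd, abs_of_pos hx]
      have h1 : deriv (fun s => φ s * s) x ≤ (m - 1) * φ x :=
        (div_le_iff₀ (hpos x hx)).1 (hm2 x hx)
      have hx' : (0:ℝ) < x := hx
      nlinarith [mul_le_mul_of_nonneg_left h1 hx'.le]
  have h2 := key self_mem_Ici (mem_Ici.2 hs) hs
  simp only [Wfn_zero, Phi_zero, mul_zero, sub_zero] at h2
  linarith

lemma Wfn_monotoneOn (hφC1 : ContDiffOn ℝ 1 φ (Set.Ioi 0))
    (hc : ContinuousOn φ (Set.Ici 0)) (hm : MonotoneOn φ (Set.Ici 0))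
    (hpos : ∀ t > 0, 0 < φ t)
    (h1 : ∀ t > 0, 0 < deriv (fun s => φ s * s) t) :
    MonotoneOn (Wfn φ) (Set.Ici 0) := by
  apply monotoneOn_of_deriv_nonneg (convex_Ici 0)
    (Wfn_continuous hφC1 hc hm hpos).continuousOn
  · intro x hx
    rw [interior_Ici] at hx
    exact (hasDerivAt_Wfn hφC1 hc hm hpos x).differentiableAt.differentiableWithinAt
  · intro x hx
    rw [interior_Ici] at hx
    rw [(hasDerivAt_Wfn hφC1 hc hm hpos x).deriv, abs_of_pos hx]
    exact le_of_lt (mul_pos hx (h1 x hx))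

lemma Wfn_pos (hφC1 : ContDiffOn ℝ 1 φ (Set.Ioi 0))
    (hc : ContinuousOn φ (Set.Ici 0)) (hm : MonotoneOn φ (Set.Ici 0))
    (hpos : ∀ t > 0, 0 < φ t) {l : ℝ} (hl : 1 < l)
    (hl2 : ∀ t > 0, l - 1 ≤ deriv (fun s => φ s * s) t / φ t)
    {s : ℝ} (hs : s ≠ 0) : 0 < Wfn φ s := by
  rw [← Wfn_abs]
  have habs : 0 < |s| := abs_pos.2 hs
  calc (0:ℝ) < (l - 1) * Phi φ |s| :=
        mul_pos (by linarith) (Phi_pos hc hpos habs)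
    _ ≤ Wfn φ |s| := Wfn_lower hφC1 hc hm hpos hl2 (abs_nonneg s)

lemma hasDerivAt_phiabs (hφC1 : ContDiffOn ℝ 1 φ (Set.Ioi 0)) {p : ℝ} (hp : p ≠ 0) :
    HasDerivAt (fun s : ℝ => φ |s| * s) (deriv (fun x => φ x * x) |p|) p := by
  rcases hp.lt_or_gt with hneg | hpos'
  · have hd : DifferentiableAt ℝ φ (-p) :=
      (hφC1.differentiableOn one_ne_zero).differentiableAt (Ioi_mem_nhds (by linarith))
    have hg : HasDerivAt (fun x => φ x * x) (deriv (fun x => φ x * x) (-p)) (-p) :=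
      (hd.mul differentiableAt_id).hasDerivAt
    have h2 : HasDerivAt (fun s : ℝ => -(φ (-s) * (-s))) (deriv (fun x => φ x * x) (-p)) p := by
      have := (hg.comp p (hasDerivAt_neg p)).neg
      exact this.congr_deriv (by ring)
    have he : (fun s : ℝ => φ |s| * s) =ᶠ[nhds p] (fun s : ℝ => -(φ (-s) * (-s))) := by
      filter_upwards [isOpen_Iio.eventually_mem hneg] with t (ht : t < 0)
      rw [abs_of_neg ht]; ring
    have h3 := h2.congr_of_eventuallyEq he
    rwa [abs_of_neg hneg]
  · have hd : DifferentiableAt ℝ φ p :=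
      (hφC1.differentiableOn one_ne_zero).differentiableAt (Ioi_mem_nhds hpos')
    have hg : HasDerivAt (fun x => φ x * x) (deriv (fun x => φ x * x) p) p :=
      (hd.mul differentiableAt_id).hasDerivAt
    have he : (fun s : ℝ => φ |s| * s) =ᶠ[nhds p] (fun x => φ x * x) := by
      filter_upwards [isOpen_Ioi.eventually_mem hpos'] with t (ht : 0 < t)
      rw [abs_of_pos ht]
    have h3 := hg.congr_of_eventuallyEq he
    rwa [abs_of_pos hpos']

end WfnLemmas

lemma rpow_helper {p u K r : ℝ} (hp : 0 ≤ p) (hu : 0 ≤ u) (hr : 0 < r) (hK : 0 < K)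
    (h : p ^ r ≤ K * u ^ r) : p ≤ K ^ r⁻¹ * u := by
  have h1 : (p ^ r) ^ r⁻¹ ≤ (K * u ^ r) ^ r⁻¹ :=
    Real.rpow_le_rpow (Real.rpow_nonneg hp r) h (by positivity)
  rwa [Real.mul_rpow hK.le (Real.rpow_nonneg hu r), Real.rpow_rpow_inv hp (ne_of_gt hr),
    Real.rpow_rpow_inv hu (ne_of_gt hr)] at h1

lemma gronwall_zero_fwd {u u' : ℝ → ℝ} {a b C : ℝ}
    (hu : ∀ t, HasDerivAt u (u' t) t)
    (hbd : ∀ t ∈ Set.Icc a b, |u' t| ≤ C * |u t|) (h0 : u a = 0) :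
    ∀ t ∈ Set.Icc a b, u t = 0 := by
  intro t ht
  have key := norm_le_gronwallBound_of_norm_deriv_right_le (f := u) (f' := u') (δ := 0)
    (K := C) (ε := 0) (a := a) (b := b)
    (fun x _ => (hu x).continuousAt.continuousWithinAt)
    (fun x _ => (hu x).hasDerivWithinAt)
    (by simp [h0])
    (fun x hx => by
      have := hbd x ⟨hx.1, hx.2.le⟩
      simpa using this)
  have := key t ht
  rw [gronwallBound_ε0] at this
  simp at this
  exact this

lemma gronwall_zero_bwd {u u' : ℝ → ℝ} {a b C : ℝ}
    (hu : ∀ t, HasDerivAt u (u' t) t)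
    (hbd : ∀ t ∈ Set.Icc a b, |u' t| ≤ C * |u t|) (h0 : u b = 0) :
    ∀ t ∈ Set.Icc a b, u t = 0 := by
  intro t ht
  have hw : ∀ τ : ℝ, HasDerivAt (fun τ => u (a + b - τ)) (-(u' (a + b - τ))) τ := by
    intro τ
    have h1 : HasDerivAt (fun τ : ℝ => a + b - τ) (-1) τ := by
      have h0 := (hasDerivAt_const τ (a + b)).sub (hasDerivAt_id τ)
      exact h0.congr_deriv (by ring)
    have := (hu (a + b - τ)).comp τ h1
    exact this.congr_deriv (by ring)
  have key := gronwall_zero_fwd (a := a) (b := b) (C := C) hw ?_ ?_ (a + b - t) ?_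
  · simpa using key
  · intro τ hτ
    have hmem : a + b - τ ∈ Set.Icc a b := ⟨by linarith [hτ.2], by linarith [hτ.1]⟩
    simpa using hbd _ hmem
  · simpa using h0
  · exact ⟨by linarith [ht.2], by linarith [ht.1]⟩

lemma no_touch_aux {q qd : ℝ → ℝ} {α δ' δ'' C : ℝ} (hα : 0 < α) (hδ' : 0 < δ') (hδ'' : 0 < δ'')
    (hqd : ∀ t, HasDerivAt q (qd t) t) (hqdc : Continuous qd) (hq0 : q 0 = 0)
    (hzero : ∀ t, q t = α → qd t = 0)
    (hG : ∀ t, α - δ' < q t → q t ≤ α → |qd t| ≤ δ'' → |qd t| ≤ C * (α - q t)) :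
    ∀ t, 0 ≤ t → q t < α := by
  have hqc : Continuous q := continuous_iff_continuousAt.2 fun s => (hqd s).continuousAt
  intro t0 ht0
  by_contra hcon
  push_neg at hcon
  set S := {t | t ∈ Set.Icc 0 t0 ∧ α ≤ q t} with hS
  have hScl : IsClosed S := by
    have : S = Set.Icc 0 t0 ∩ q ⁻¹' (Set.Ici α) := rfl
    rw [this]
    exact isClosed_Icc.inter (isClosed_Ici.preimage hqc)
  have hSne : S.Nonempty := ⟨t0, ⟨ht0, le_rfl⟩, hcon⟩
  have hSbd : BddBelow S := ⟨0, fun x hx => hx.1.1⟩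
  set t1 := sInf S with ht1def
  have ht1S : t1 ∈ S := hScl.csInf_mem hSne hSbd
  have ht1lb : ∀ s, 0 ≤ s → s < t1 → q s < α := by
    intro s hs0 hst
    by_contra h
    push_neg at h
    have hsS : s ∈ S := ⟨⟨hs0, le_trans hst.le ht1S.1.2⟩, h⟩
    exact absurd (csInf_le hSbd hsS) (not_le.2 hst)
  have ht1pos : 0 < t1 := by
    rcases eq_or_lt_of_le ht1S.1.1 with h | h
    · exfalso
      have := ht1S.2
      rw [← h, hq0] at this
      linarith
    · exact h
  have hqt1 : q t1 = α := by
    by_contra h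
    have hlt : α < q t1 := lt_of_le_of_ne ht1S.2 (Ne.symm h)
    have hmem : α ∈ Set.Ioo (q 0) (q t1) := ⟨by rw [hq0]; exact hα, hlt⟩
    obtain ⟨s, hs, hqs⟩ := intermediate_value_Ioo ht1pos.le hqc.continuousOn hmem
    exact absurd hqs (ne_of_lt (ht1lb s hs.1.le hs.2))
  have hqd1 : qd t1 = 0 := hzero t1 hqt1
  have h1 : ∀ᶠ s in nhds t1, α - δ' < q s :=
    (hqc.tendsto t1).eventually (by rw [hqt1]; exact eventually_gt_nhds (by linarith))
  have h2 : ∀ᶠ s in nhds t1, |qd s| < δ'' :=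
    ((continuous_abs.comp hqdc).tendsto t1).eventually
      (by simp only [Function.comp_apply, hqd1, abs_zero]; exact eventually_lt_nhds hδ'')
  obtain ⟨η, hη, hball⟩ := Metric.eventually_nhds_iff.1 (h1.and h2)
  set a := max 0 (t1 - η / 2) with hadef
  have ha0 : 0 ≤ a := le_max_left _ _
  have ha1 : a < t1 := max_lt ht1pos (by linarith)
  have ha2 : t1 - η / 2 ≤ a := le_max_right _ _
  have hmemball : ∀ s ∈ Set.Icc a t1, α - δ' < q s ∧ |qd s| < δ'' := by
    intro s hs
    apply hball
    rw [Real.dist_eq, abs_of_nonpos (by linarith [hs.2])]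
    linarith [hs.1, ha2]
  have hqle : ∀ s ∈ Set.Icc a t1, q s ≤ α := by
    intro s hs
    rcases eq_or_lt_of_le hs.2 with h | h
    · rw [h, hqt1]
    · exact (ht1lb s (le_trans ha0 hs.1) h).le
  have hkey := gronwall_zero_bwd (u := fun s => α - q s) (u' := fun s => -qd s)
    (a := a) (b := t1) (C := C)
    (fun s => ((hqd s).const_sub α))
    (fun s hs => by
      have hb := hmemball s hs
      have hq := hqle s hs
      rw [abs_neg, abs_of_nonneg (by linarith [hq] : (0:ℝ) ≤ α - q s)]
      exact hG s hb.1 hq hb.2.le)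
    (by simp [hqt1])
    a ⟨le_rfl, ha1.le⟩
  have hka : α - q a = 0 := hkey
  have : q a = α := by linarith
  exact absurd this (ne_of_lt (ht1lb a ha0 ha1))

lemma no_touch {q qd : ℝ → ℝ} {α δ' δ'' C : ℝ} (hα : 0 < α) (hδ' : 0 < δ') (hδ'' : 0 < δ'')
    (hqd : ∀ t, HasDerivAt q (qd t) t) (hqdc : Continuous qd) (hq0 : q 0 = 0)
    (hzero : ∀ t, q t = α → qd t = 0)
    (hG : ∀ t, α - δ' < q t → q t ≤ α → |qd t| ≤ δ'' → |qd t| ≤ C * (α - q t)) :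
    ∀ t, q t < α := by
  intro t
  rcases le_or_gt 0 t with h | h
  · exact no_touch_aux hα hδ' hδ'' hqd hqdc hq0 hzero hG t h
  · have hrev := no_touch_aux (q := fun s => q (-s)) (qd := fun s => -qd (-s)) hα hδ' hδ''
      (fun s => by have h := (hqd (-s)).comp s (hasDerivAt_neg s); exact h.congr_deriv (by ring))
      ((hqdc.comp continuous_neg).neg)
      (by simp [hq0])
      (fun s hs => by rw [neg_eq_zero]; exact hzero (-s) hs)
      (fun s h1 h2 h3 => by
        rw [abs_neg] at h3 ⊢
        exact hG (-s) h1 h2 h3)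
      (-t) (by linarith)
    simpa using hrev


def IsClassicalSolution (φ V q : ℝ → ℝ) : Prop :=
  Differentiable ℝ q ∧
  ∀ t : ℝ, HasDerivAt
    (fun s => if deriv q s = 0 then 0 else φ |deriv q s| * deriv q s)
    (deriv V (q t)) t

def IsHeteroclinic (φ V : ℝ → ℝ) (α : ℝ) (q : ℝ → ℝ) : Prop :=
  IsClassicalSolution φ V q ∧ Differentiable ℝ (deriv q) ∧ Continuous (deriv q) ∧
  q 0 = 0 ∧ Tendsto q atTop (nhds α) ∧ Tendsto q atBot (nhds (-α))

set_option maxHeartbeats 2000000 in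
theorem statement3 (φ V : ℝ → ℝ) (l m α : ℝ) (q : ℝ → ℝ)
    (hφC1 : ContDiffOn ℝ 1 φ (Set.Ioi 0))
    (hφpos : ∀ t > 0, 0 < φ t)
    (hφ1 : ∀ t > 0, 0 < deriv (fun s => φ s * s) t)
    (hl : 1 < l) (hlm : l ≤ m)
    (hφ2 : ∀ t > 0, l - 1 ≤ deriv (fun s => φ s * s) t / φ t ∧
      deriv (fun s => φ s * s) t / φ t ≤ m - 1)
    (hφ3 : ∃ c₁ c₂ δ₀ r : ℝ, 0 < c₁ ∧ 0 < c₂ ∧ 0 < δ₀ ∧ 1 < r ∧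
      ∀ t : ℝ, 0 < t → t ≤ δ₀ → c₁ * t ^ (r - 1) ≤ φ t * t ∧ φ t * t ≤ c₂ * t ^ (r - 1))
    (hφ4 : ContinuousOn φ (Set.Ici 0) ∧ MonotoneOn φ (Set.Ici 0))
    (hα : 0 < α)
    (hV1 : ContDiff ℝ 1 V) (hVnn : ∀ t, 0 ≤ V t)
    (hV2 : V α = 0 ∧ V (-α) = 0 ∧ ∀ t, -α < t → t < α → 0 < V t)
    (hV3 : ∃ a₁ a₂ a₃ a₄ δ : ℝ, 0 < a₁ ∧ 0 < a₂ ∧ 0 < a₃ ∧ 0 < a₄ ∧ 0 < δ ∧ δ < α ∧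
      (∀ t, α - δ < t → t ≤ α → a₁ * Phi φ |t - α| ≤ V t ∧ V t ≤ a₂ * Phi φ |t - α|) ∧
      (∀ t, -α ≤ t → t < -α + δ → a₃ * Phi φ |t + α| ≤ V t ∧ V t ≤ a₄ * Phi φ |t + α|))
    (hV4 : ∃ k₁ k₂ k₃ k₄ k₅ k₆ k₇ k₈ : ℝ, 0 < k₁ ∧ 0 < k₂ ∧ 0 < k₃ ∧ 0 < k₄ ∧
      0 < k₅ ∧ 0 < k₆ ∧ 0 < k₇ ∧ 0 < k₈ ∧
      (∀ t, 0 ≤ t → t ≤ α →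
        -(k₃ * t * φ (k₄ * |t - α|) * |t - α|) ≤ deriv V t ∧
        deriv V t ≤ -(k₁ * t * φ (k₂ * |t - α|) * |t - α|)) ∧
      (∀ t, -α ≤ t → t ≤ 0 →
        -(k₇ * t * φ (k₈ * |t + α|) * |t + α|) ≤ deriv V t ∧
        deriv V t ≤ -(k₅ * t * φ (k₆ * |t + α|) * |t + α|)))
    (hV5 : ∃ ρ > 0, StrictConvexOn ℝ (Set.Ioo (-α - ρ) (-α + ρ)) V ∧
      StrictConvexOn ℝ (Set.Ioo (α - ρ) (α + ρ)) V)
    (hq : IsHeteroclinic φ V α q) :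
    ∃ β₁ β₂ β₃ β₄ : ℝ, 0 < β₁ ∧ 0 < β₂ ∧ 0 < β₃ ∧ 0 < β₄ ∧
      (∀ t : ℝ, 0 ≤ t → 0 < deriv q t ∧ deriv q t ≤ β₁ * Real.exp (-β₂ * t)) ∧
      (∀ t : ℝ, t ≤ 0 → 0 < deriv q t ∧ deriv q t ≤ β₃ * Real.exp (β₄ * t)) := by
  obtain ⟨hφ4c, hφ4m⟩ := hφ4
  obtain ⟨⟨hqdiff, heq⟩, hq'diff, hq'cont, hq0, hqtop, hqbot⟩ := hq
  obtain ⟨c₁, c₂, δ₀, r, hc₁, hc₂, hδ₀, hr, h3⟩ := hφ3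
  obtain ⟨a₁, a₂, a₃, a₄, δ, ha₁, ha₂, ha₃, ha₄, hδ, hδα, hV3a, hV3b⟩ := hV3
  obtain ⟨hVα, hVmα, hVpos⟩ := hV2
  have hVc : Continuous V := hV1.continuous
  have hVd : Differentiable ℝ V := hV1.differentiable one_ne_zero
  have hl1 : (0:ℝ) < l - 1 := by linarith
  have hm1 : (0:ℝ) < m - 1 := by linarith
  have hl2 : ∀ t > 0, l - 1 ≤ deriv (fun s => φ s * s) t / φ t := fun t ht => (hφ2 t ht).1
  have hm2 : ∀ t > 0, deriv (fun s => φ s * s) t / φ t ≤ m - 1 := fun t ht => (hφ2 t ht).2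
  have hr0 : (0:ℝ) < r := by linarith
  -- Energy conservation: Wfn φ (q' t) - V (q t) is constant, and equals 0.
  have hlaw : ∀ t, Wfn φ (deriv q t) = V (q t) := by
    have hfeq : (fun s => if deriv q s = 0 then 0 else φ |deriv q s| * deriv q s)
        = fun s => φ |deriv q s| * deriv q s := by
      funext s
      split_ifs with h
      · rw [h]; simp
      · rfl
    have heq' : ∀ t, HasDerivAt (fun s => φ |deriv q s| * deriv q s) (deriv V (q t)) t := by
      intro t; have h := heq t; rwa [hfeq] at h
    have hEn : ∀ t, HasDerivAt (fun s => Wfn φ (deriv q s) - V (q s)) 0 t := by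
      intro t
      have hq'' : HasDerivAt (deriv q) (deriv (deriv q) t) t := (hq'diff t).hasDerivAt
      have hW := (hasDerivAt_Wfn hφC1 hφ4c hφ4m hφpos (deriv q t)).comp t hq''
      have hVq := ((hVd (q t)).hasDerivAt).comp t (hqdiff t).hasDerivAt
      have hsub := hW.sub hVq
      have hval : deriv q t * deriv (fun x => φ x * x) |deriv q t| * deriv (deriv q) t
          - deriv V (q t) * deriv q t = 0 := by
        rcases eq_or_ne (deriv q t) 0 with h0 | h0
        · rw [h0]; ring
        · have hchain : HasDerivAt (fun s => φ |deriv q s| * deriv q s)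
              (deriv (fun x => φ x * x) |deriv q t| * deriv (deriv q) t) t :=
            (hasDerivAt_phiabs hφC1 h0).comp t hq''
          have huniq := hchain.unique (heq' t)
          rw [mul_assoc, huniq]; ring
      rw [← hval]
      exact hsub
    have hconst := is_const_of_deriv_eq_zero (𝕜 := ℝ)
      (f := fun s => Wfn φ (deriv q s) - V (q s))
      (fun t => (hEn t).differentiableAt) (fun t => (hEn t).deriv)
    have hsl : ∀ n : ℕ, ∃ ξ ∈ Set.Ioo (n:ℝ) ((n:ℝ)+1),
        deriv q ξ = (q ((n:ℝ)+1) - q (n:ℝ)) / (((n:ℝ)+1) - (n:ℝ)) := fun n =>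
      exists_hasDerivAt_eq_slope q (deriv q) (by linarith) hqdiff.continuous.continuousOn
        (fun x _ => (hqdiff x).hasDerivAt)
    choose ξ hξmem hξval using hsl
    have hξtop : Tendsto ξ atTop atTop :=
      tendsto_atTop_mono (fun n => (hξmem n).1.le) tendsto_natCast_atTop_atTop
    have hq'ξ : Tendsto (fun n => deriv q (ξ n)) atTop (nhds 0) := by
      have h1 : Tendsto (fun n : ℕ => q ((n:ℝ)+1) - q (n:ℝ)) atTop (nhds (α - α)) :=
        (hqtop.comp (tendsto_atTop_add_const_right _ 1 tendsto_natCast_atTop_atTop)).sub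
          (hqtop.comp tendsto_natCast_atTop_atTop)
      rw [sub_self] at h1
      apply h1.congr
      intro n
      rw [hξval n]
      simp
    have hWξ : Tendsto (fun n => Wfn φ (deriv q (ξ n))) atTop (nhds 0) := by
      have h := ((Wfn_continuous hφC1 hφ4c hφ4m hφpos).tendsto 0).comp hq'ξ
      simpa [Wfn_zero, Function.comp_def] using h
    have hVξ : Tendsto (fun n => V (q (ξ n))) atTop (nhds 0) := by
      have h := (hVc.tendsto α).comp (hqtop.comp hξtop)
      simpa [hVα, Function.comp_def] using h
    have hEnξ : Tendsto (fun n => Wfn φ (deriv q (ξ n)) - V (q (ξ n))) atTop (nhds 0) := by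
      have := hWξ.sub hVξ
      simpa using this
    intro t
    have hc : (fun n : ℕ => Wfn φ (deriv q (ξ n)) - V (q (ξ n)))
        = fun _ => Wfn φ (deriv q t) - V (q t) := funext fun n => hconst (ξ n) t
    rw [hc] at hEnξ
    have := tendsto_nhds_unique hEnξ tendsto_const_nhds
    linarith [this.symm]
  -- zero set of Wfn and sign of q'
  set δ' := min δ δ₀ with hδ'def
  have hδ'pos : 0 < δ' := lt_min hδ hδ₀
  have hδ'δ : δ' ≤ δ := min_le_left _ _
  have hδ'δ₀ : δ' ≤ δ₀ := min_le_right _ _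
  -- upper comparison near α
  set CA : ℝ := ((a₂ * c₂) / ((l - 1) * c₁)) ^ r⁻¹ with hCAdef
  have hCApos : 0 < CA := Real.rpow_pos_of_pos (by positivity) _
  have hGa : ∀ t, α - δ' < q t → q t ≤ α → |deriv q t| ≤ δ₀ →
      |deriv q t| ≤ CA * (α - q t) := by
    intro t hq1 hq2 hq3
    set p := |deriv q t| with hpdef
    set u := α - q t with hudef
    have hu0 : 0 ≤ u := by simp only [hudef]; linarith
    have huδ : u ≤ δ₀ := by simp only [hudef]; have := lt_of_lt_of_le hq1 (le_refl _); linarith [hδ'δ₀]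
    have habs : |q t - α| = u := by rw [abs_of_nonpos (by linarith), hudef]; ring
    have hVle : V (q t) ≤ a₂ * Phi φ u := by
      have h := (hV3a (q t) (by linarith [hδ'δ]) hq2).2
      rwa [habs] at h
    have hWp : (l - 1) * Phi φ p ≤ Wfn φ p :=
      Wfn_lower hφC1 hφ4c hφ4m hφpos hl2 (abs_nonneg _)
    have hWfnp : Wfn φ p = V (q t) := by rw [hpdef, Wfn_abs]; exact hlaw t
    have hPhip : c₁ / r * p ^ r ≤ Phi φ p :=
      (Phi_bounds hφ4c hc₁ hc₂ hr h3 (abs_nonneg _) hq3).1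
    have hPhiu : Phi φ u ≤ c₂ / r * u ^ r :=
      (Phi_bounds hφ4c hc₁ hc₂ hr h3 hu0 huδ).2
    have hchain : p ^ r ≤ ((a₂ * c₂) / ((l - 1) * c₁)) * u ^ r := by
      have h1 : (l - 1) * (c₁ / r * p ^ r) ≤ a₂ * (c₂ / r * u ^ r) :=
        calc (l - 1) * (c₁ / r * p ^ r) ≤ (l - 1) * Phi φ p :=
              mul_le_mul_of_nonneg_left hPhip hl1.le
          _ ≤ Wfn φ p := hWp
          _ = V (q t) := hWfnp
          _ ≤ a₂ * Phi φ u := hVle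
          _ ≤ a₂ * (c₂ / r * u ^ r) := mul_le_mul_of_nonneg_left hPhiu ha₂.le
      rw [div_mul_eq_mul_div, le_div_iff₀ (by positivity)]
      have h2 := mul_le_mul_of_nonneg_right h1 hr0.le
      have e1 : (l - 1) * (c₁ / r * p ^ r) * r = (l - 1) * c₁ * p ^ r := by
        field_simp
      have e2 : a₂ * (c₂ / r * u ^ r) * r = a₂ * c₂ * u ^ r := by
        field_simp
      rw [e1, e2] at h2
      linarith
    exact rpow_helper (abs_nonneg _) hu0 hr0 (by positivity) hchain
  set CB : ℝ := ((a₄ * c₂) / ((l - 1) * c₁)) ^ r⁻¹ with hCBdef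
  have hCBpos : 0 < CB := Real.rpow_pos_of_pos (by positivity) _
  have hGb : ∀ t, -α ≤ q t → q t < -α + δ' → |deriv q t| ≤ δ₀ →
      |deriv q t| ≤ CB * (q t + α) := by
    intro t hq1 hq2 hq3
    set p := |deriv q t| with hpdef
    set u := q t + α with hudef
    have hu0 : 0 ≤ u := by simp only [hudef]; linarith
    have huδ : u ≤ δ₀ := by simp only [hudef]; linarith [hδ'δ₀]
    have habs : |q t + α| = u := by rw [abs_of_nonneg (by linarith), hudef]
    have hVle : V (q t) ≤ a₄ * Phi φ u := by
      have h := (hV3b (q t) hq1 (by linarith [hδ'δ])).2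
      rwa [habs] at h
    have hWp : (l - 1) * Phi φ p ≤ Wfn φ p :=
      Wfn_lower hφC1 hφ4c hφ4m hφpos hl2 (abs_nonneg _)
    have hWfnp : Wfn φ p = V (q t) := by rw [hpdef, Wfn_abs]; exact hlaw t
    have hPhip : c₁ / r * p ^ r ≤ Phi φ p :=
      (Phi_bounds hφ4c hc₁ hc₂ hr h3 (abs_nonneg _) hq3).1
    have hPhiu : Phi φ u ≤ c₂ / r * u ^ r :=
      (Phi_bounds hφ4c hc₁ hc₂ hr h3 hu0 huδ).2
    have hchain : p ^ r ≤ ((a₄ * c₂) / ((l - 1) * c₁)) * u ^ r := by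
      have h1 : (l - 1) * (c₁ / r * p ^ r) ≤ a₄ * (c₂ / r * u ^ r) :=
        calc (l - 1) * (c₁ / r * p ^ r) ≤ (l - 1) * Phi φ p :=
              mul_le_mul_of_nonneg_left hPhip hl1.le
          _ ≤ Wfn φ p := hWp
          _ = V (q t) := hWfnp
          _ ≤ a₄ * Phi φ u := hVle
          _ ≤ a₄ * (c₂ / r * u ^ r) := mul_le_mul_of_nonneg_left hPhiu ha₄.le
      rw [div_mul_eq_mul_div, le_div_iff₀ (by positivity)]
      have h2 := mul_le_mul_of_nonneg_right h1 hr0.le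
      have e1 : (l - 1) * (c₁ / r * p ^ r) * r = (l - 1) * c₁ * p ^ r := by
        field_simp
      have e2 : a₄ * (c₂ / r * u ^ r) * r = a₄ * c₂ * u ^ r := by
        field_simp
      rw [e1, e2] at h2
      linarith
    exact rpow_helper (abs_nonneg _) hu0 hr0 (by positivity) hchain
  -- lower comparisons
  set CA' : ℝ := (((m - 1) * c₂) / (a₁ * c₁)) ^ r⁻¹ with hCA'def
  have hCA'pos : 0 < CA' := Real.rpow_pos_of_pos (by positivity) _
  have hHa : ∀ t, α - δ' < q t → q t ≤ α → |deriv q t| ≤ δ₀ →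
      α - q t ≤ CA' * |deriv q t| := by
    intro t hq1 hq2 hq3
    set p := |deriv q t| with hpdef
    set u := α - q t with hudef
    have hu0 : 0 ≤ u := by simp only [hudef]; linarith
    have huδ : u ≤ δ₀ := by simp only [hudef]; linarith [hδ'δ₀]
    have habs : |q t - α| = u := by rw [abs_of_nonpos (by linarith), hudef]; ring
    have hVge : a₁ * Phi φ u ≤ V (q t) := by
      have h := (hV3a (q t) (by linarith [hδ'δ]) hq2).1
      rwa [habs] at h
    have hWp : Wfn φ p ≤ (m - 1) * Phi φ p :=
      Wfn_upper hφC1 hφ4c hφ4m hφpos hm2 (abs_nonneg _)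
    have hWfnp : Wfn φ p = V (q t) := by rw [hpdef, Wfn_abs]; exact hlaw t
    have hPhip : Phi φ p ≤ c₂ / r * p ^ r :=
      (Phi_bounds hφ4c hc₁ hc₂ hr h3 (abs_nonneg _) hq3).2
    have hPhiu : c₁ / r * u ^ r ≤ Phi φ u :=
      (Phi_bounds hφ4c hc₁ hc₂ hr h3 hu0 huδ).1
    have hchain : u ^ r ≤ (((m - 1) * c₂) / (a₁ * c₁)) * p ^ r := by
      have h1 : a₁ * (c₁ / r * u ^ r) ≤ (m - 1) * (c₂ / r * p ^ r) :=
        calc a₁ * (c₁ / r * u ^ r) ≤ a₁ * Phi φ u :=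
              mul_le_mul_of_nonneg_left hPhiu ha₁.le
          _ ≤ V (q t) := hVge
          _ = Wfn φ p := hWfnp.symm
          _ ≤ (m - 1) * Phi φ p := hWp
          _ ≤ (m - 1) * (c₂ / r * p ^ r) := mul_le_mul_of_nonneg_left hPhip hm1.le
      rw [div_mul_eq_mul_div, le_div_iff₀ (by positivity)]
      have h2 := mul_le_mul_of_nonneg_right h1 hr0.le
      have e1 : a₁ * (c₁ / r * u ^ r) * r = a₁ * c₁ * u ^ r := by field_simp
      have e2 : (m - 1) * (c₂ / r * p ^ r) * r = (m - 1) * c₂ * p ^ r := by field_simp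
      rw [e1, e2] at h2
      linarith
    exact rpow_helper hu0 (abs_nonneg _) hr0 (by positivity) hchain
  set CB' : ℝ := (((m - 1) * c₂) / (a₃ * c₁)) ^ r⁻¹ with hCB'def
  have hCB'pos : 0 < CB' := Real.rpow_pos_of_pos (by positivity) _
  have hHb : ∀ t, -α ≤ q t → q t < -α + δ' → |deriv q t| ≤ δ₀ →
      q t + α ≤ CB' * |deriv q t| := by
    intro t hq1 hq2 hq3
    set p := |deriv q t| with hpdef
    set u := q t + α with hudef
    have hu0 : 0 ≤ u := by simp only [hudef]; linarith
    have huδ : u ≤ δ₀ := by simp only [hudef]; linarith [hδ'δ₀]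
    have habs : |q t + α| = u := by rw [abs_of_nonneg (by linarith), hudef]
    have hVge : a₃ * Phi φ u ≤ V (q t) := by
      have h := (hV3b (q t) hq1 (by linarith [hδ'δ])).1
      rwa [habs] at h
    have hWp : Wfn φ p ≤ (m - 1) * Phi φ p :=
      Wfn_upper hφC1 hφ4c hφ4m hφpos hm2 (abs_nonneg _)
    have hWfnp : Wfn φ p = V (q t) := by rw [hpdef, Wfn_abs]; exact hlaw t
    have hPhip : Phi φ p ≤ c₂ / r * p ^ r :=
      (Phi_bounds hφ4c hc₁ hc₂ hr h3 (abs_nonneg _) hq3).2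
    have hPhiu : c₁ / r * u ^ r ≤ Phi φ u :=
      (Phi_bounds hφ4c hc₁ hc₂ hr h3 hu0 huδ).1
    have hchain : u ^ r ≤ (((m - 1) * c₂) / (a₃ * c₁)) * p ^ r := by
      have h1 : a₃ * (c₁ / r * u ^ r) ≤ (m - 1) * (c₂ / r * p ^ r) :=
        calc a₃ * (c₁ / r * u ^ r) ≤ a₃ * Phi φ u :=
              mul_le_mul_of_nonneg_left hPhiu ha₃.le
          _ ≤ V (q t) := hVge
          _ = Wfn φ p := hWfnp.symm
          _ ≤ (m - 1) * Phi φ p := hWp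
          _ ≤ (m - 1) * (c₂ / r * p ^ r) := mul_le_mul_of_nonneg_left hPhip hm1.le
      rw [div_mul_eq_mul_div, le_div_iff₀ (by positivity)]
      have h2 := mul_le_mul_of_nonneg_right h1 hr0.le
      have e1 : a₃ * (c₁ / r * u ^ r) * r = a₃ * c₁ * u ^ r := by field_simp
      have e2 : (m - 1) * (c₂ / r * p ^ r) * r = (m - 1) * c₂ * p ^ r := by field_simp
      rw [e1, e2] at h2
      linarith
    exact rpow_helper hu0 (abs_nonneg _) hr0 (by positivity) hchain
  -- barriers
  have hup : ∀ t, q t < α := by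
    apply no_touch hα hδ'pos hδ₀ (fun t => (hqdiff t).hasDerivAt) hq'cont hq0
    · intro t ht
      have h := hlaw t
      rw [ht, hVα] at h
      by_contra hne0
      exact absurd h (ne_of_gt (Wfn_pos hφC1 hφ4c hφ4m hφpos hl hl2 hne0))
    · exact hGa
  have hlow : ∀ t, -α < q t := by
    have hneg := no_touch (q := fun s => -q s) (qd := fun s => -deriv q s) hα hδ'pos hδ₀
      (fun t => ((hqdiff t).hasDerivAt).neg) hq'cont.neg (by simp [hq0])
      (fun t ht => by
        have ht' : -q t = α := ht
        have hqt : q t = -α := by linarith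
        have h := hlaw t
        rw [hqt, hVmα] at h
        show -(deriv q t) = 0
        rw [neg_eq_zero]
        by_contra hne0
        exact absurd h (ne_of_gt (Wfn_pos hφC1 hφ4c hφ4m hφpos hl hl2 hne0)))
      (fun t h1 h2 h3 => by
        have h1' : α - δ' < -q t := h1
        have h2' : -q t ≤ α := h2
        have h3' : |(-(deriv q t))| ≤ δ₀ := h3
        rw [abs_neg] at h3'
        show |(-(deriv q t))| ≤ CB * (α - -q t)
        rw [abs_neg]
        calc |deriv q t| ≤ CB * (q t + α) := hGb t (by linarith) (by linarith) h3'
          _ = CB * (α - -q t) := by ring)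
    intro t
    have hh : -q t < α := hneg t
    linarith
  -- q' never vanishes and is positive
  have hne : ∀ t, deriv q t ≠ 0 := by
    intro t h
    have hl' := hlaw t
    rw [h, Wfn_zero] at hl'
    exact absurd hl'.symm (ne_of_gt (hVpos (q t) (hlow t) (hup t)))
  have hqd_pos : ∀ t, 0 < deriv q t := by
    have hex : ∃ s, 0 < deriv q s := by
      have hev : ∀ᶠ t in atTop, α / 2 < q t :=
        hqtop.eventually (eventually_gt_nhds (by linarith))
      obtain ⟨T, hT⟩ := eventually_atTop.1 hev
      set T' := max T 1 with hT'def
      have hT'q : α / 2 < q T' := hT T' (le_max_left _ _)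
      have hT'pos : (0:ℝ) < T' := lt_of_lt_of_le one_pos (le_max_right _ _)
      obtain ⟨ζ, hζmem, hζval⟩ := exists_hasDerivAt_eq_slope q (deriv q) hT'pos
        hqdiff.continuous.continuousOn (fun x _ => (hqdiff x).hasDerivAt)
      refine ⟨ζ, ?_⟩
      rw [hζval, hq0]
      have h1 : 0 < q T' := by linarith
      have h2 : (0:ℝ) < T' - 0 := by linarith
      exact div_pos (by linarith) h2
    obtain ⟨s, hs⟩ := hex
    intro t
    rcases lt_trichotomy (deriv q t) 0 with h | h | h
    · exfalso
      have hmem : (0:ℝ) ∈ Set.uIcc (deriv q t) (deriv q s) :=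
        Set.mem_uIcc.2 (Or.inl ⟨h.le, hs.le⟩)
      obtain ⟨z, _, hz⟩ := intermediate_value_uIcc hq'cont.continuousOn hmem
      exact hne z hz
    · exact absurd h (hne t)
    · exact h
  -- decay at +infinity
  have hVq_top : Tendsto (fun t => V (q t)) atTop (nhds 0) := by
    have h := (hVc.tendsto α).comp hqtop
    simpa [hVα, Function.comp_def] using h
  have hWδ₀ : 0 < Wfn φ δ₀ := Wfn_pos hφC1 hφ4c hφ4m hφpos hl hl2 (ne_of_gt hδ₀)
  have hWmono := Wfn_monotoneOn hφC1 hφ4c hφ4m hφpos hφ1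
  have hsmall_top : ∀ᶠ t in atTop, deriv q t ≤ δ₀ := by
    have h1 : ∀ᶠ t in atTop, V (q t) < Wfn φ δ₀ := hVq_top.eventually (eventually_lt_nhds hWδ₀)
    filter_upwards [h1] with t ht
    by_contra hcon
    push_neg at hcon
    have hmono := hWmono (Set.mem_Ici.2 hδ₀.le)
      (Set.mem_Ici.2 (by linarith [hqd_pos t])) hcon.le
    rw [hlaw t] at hmono
    linarith
  have hnear_top : ∀ᶠ t in atTop, α - δ' < q t :=
    hqtop.eventually (eventually_gt_nhds (by linarith))
  obtain ⟨T0, hT0⟩ := eventually_atTop.1 (hsmall_top.and hnear_top)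
  set T := max T0 0 with hTdef
  have hT0le : (0:ℝ) ≤ T := le_max_right _ _
  have hcondT : ∀ t, T ≤ t → α - δ' < q t ∧ q t ≤ α ∧ |deriv q t| ≤ δ₀ := by
    intro t ht
    have h := hT0 t (le_trans (le_max_left _ _) ht)
    exact ⟨h.2, (hup t).le, by rw [abs_of_pos (hqd_pos t)]; exact h.1⟩
  set cc := CA'⁻¹ with hccdef
  have hccpos : 0 < cc := inv_pos.2 hCA'pos
  have hE : ∀ x : ℝ, HasDerivAt (fun s => Real.exp (cc * s) * (α - q s))
      (Real.exp (cc * x) * cc * (α - q x) + Real.exp (cc * x) * (-(deriv q x))) x := by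
    intro x
    have h1 : HasDerivAt (fun s : ℝ => Real.exp (cc * s)) (Real.exp (cc * x) * cc) x := by
      have h := (Real.hasDerivAt_exp (cc * x)).comp x ((hasDerivAt_id x).const_mul cc)
      have h' : HasDerivAt (fun s : ℝ => Real.exp (cc * s)) (Real.exp (cc * x) * (cc * 1)) x := h
      simpa using h' 
    have h2 : HasDerivAt (fun s => α - q s) (-(deriv q x)) x := (hqdiff x).hasDerivAt.const_sub α
    exact h1.mul h2
  have hanti : AntitoneOn (fun s => Real.exp (cc * s) * (α - q s)) (Set.Ici T) := by
    apply antitoneOn_of_deriv_nonpos (convex_Ici T)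
    · exact ((Real.continuous_exp.comp (continuous_const.mul continuous_id)).mul
        (continuous_const.sub hqdiff.continuous)).continuousOn
    · intro x _
      exact (hE x).differentiableAt.differentiableWithinAt
    · intro x hx
      rw [interior_Ici] at hx
      rw [(hE x).deriv]
      have hcond := hcondT x (le_of_lt hx)
      have hHa' := hHa x hcond.1 hcond.2.1 hcond.2.2
      rw [abs_of_pos (hqd_pos x)] at hHa'
      have hle : cc * (α - q x) ≤ deriv q x := by
        have h := mul_le_mul_of_nonneg_left hHa' hccpos.le
        rwa [hccdef, ← mul_assoc, inv_mul_cancel₀ (ne_of_gt hCA'pos), one_mul] at h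
      nlinarith [mul_le_mul_of_nonneg_left (sub_nonpos.2 hle) (Real.exp_pos (cc * x)).le]
  have hdecayA : ∀ t, T ≤ t →
      deriv q t ≤ (CA * (α - q T) * Real.exp (cc * T)) * Real.exp (-cc * t) := by
    intro t ht
    have h1 : Real.exp (cc * t) * (α - q t) ≤ Real.exp (cc * T) * (α - q T) :=
      hanti (Set.mem_Ici.2 le_rfl) (Set.mem_Ici.2 ht) ht
    have h2 := mul_le_mul_of_nonneg_left h1 (Real.exp_pos (-(cc * t))).le
    rw [← mul_assoc, ← Real.exp_add, neg_add_cancel, Real.exp_zero, one_mul] at h2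
    have hcond := hcondT t ht
    have hGa' := hGa t hcond.1 hcond.2.1 hcond.2.2
    rw [abs_of_pos (hqd_pos t)] at hGa'
    calc deriv q t ≤ CA * (α - q t) := hGa'
      _ ≤ CA * (Real.exp (-(cc * t)) * (Real.exp (cc * T) * (α - q T))) :=
          mul_le_mul_of_nonneg_left h2 hCApos.le
      _ = (CA * (α - q T) * Real.exp (cc * T)) * Real.exp (-cc * t) := by
          rw [neg_mul]; ring
  obtain ⟨x₀, hx₀mem, hx₀'⟩ := IsCompact.exists_isMaxOn isCompact_Icc (Set.nonempty_Icc.2 hT0le)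
    hq'cont.continuousOn
  have hx₀ : ∀ y ∈ Set.Icc 0 T, deriv q y ≤ deriv q x₀ := fun y hy => hx₀' hy
  set β₁ := max (deriv q x₀ * Real.exp (cc * T)) (CA * (α - q T) * Real.exp (cc * T)) with hβ₁def
  have hβ₁pos : 0 < β₁ :=
    lt_max_of_lt_left (mul_pos (hqd_pos x₀) (Real.exp_pos _))
  have hPosSide : ∀ t : ℝ, 0 ≤ t → 0 < deriv q t ∧ deriv q t ≤ β₁ * Real.exp (-cc * t) := by
    intro t ht
    refine ⟨hqd_pos t, ?_⟩
    rcases le_total t T with hcase | hcase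
    · have h1 : deriv q t ≤ deriv q x₀ := hx₀ t ⟨ht, hcase⟩
      have h2 : Real.exp 0 ≤ Real.exp (cc * T) * Real.exp (-cc * t) := by
        rw [← Real.exp_add]
        apply Real.exp_le_exp.2
        rw [neg_mul]
        nlinarith [mul_nonneg hccpos.le (sub_nonneg.2 hcase)]
      rw [Real.exp_zero] at h2
      calc deriv q t ≤ deriv q x₀ := h1
        _ = deriv q x₀ * 1 := (mul_one _).symm
        _ ≤ deriv q x₀ * (Real.exp (cc * T) * Real.exp (-cc * t)) :=
            mul_le_mul_of_nonneg_left h2 (hqd_pos x₀).le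
        _ = (deriv q x₀ * Real.exp (cc * T)) * Real.exp (-cc * t) := by ring
        _ ≤ β₁ * Real.exp (-cc * t) :=
            mul_le_mul_of_nonneg_right (le_max_left _ _) (Real.exp_pos _).le
    · calc deriv q t ≤ (CA * (α - q T) * Real.exp (cc * T)) * Real.exp (-cc * t) :=
            hdecayA t hcase
        _ ≤ β₁ * Real.exp (-cc * t) :=
            mul_le_mul_of_nonneg_right (le_max_right _ _) (Real.exp_pos _).le
  -- decay at -infinity
  have hVq_bot : Tendsto (fun t => V (q t)) atBot (nhds 0) := by
    have h := (hVc.tendsto (-α)).comp hqbot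
    simpa [hVmα, Function.comp_def] using h
  have hsmall_bot : ∀ᶠ t in atBot, deriv q t ≤ δ₀ := by
    have h1 : ∀ᶠ t in atBot, V (q t) < Wfn φ δ₀ := hVq_bot.eventually (eventually_lt_nhds hWδ₀)
    filter_upwards [h1] with t ht
    by_contra hcon
    push_neg at hcon
    have hmono := hWmono (Set.mem_Ici.2 hδ₀.le)
      (Set.mem_Ici.2 (by linarith [hqd_pos t])) hcon.le
    rw [hlaw t] at hmono
    linarith
  have hnear_bot : ∀ᶠ t in atBot, q t < -α + δ' :=
    hqbot.eventually (eventually_lt_nhds (by linarith))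
  obtain ⟨T1, hT1⟩ := eventually_atBot.1 (hsmall_bot.and hnear_bot)
  set S := min T1 0 with hSdef
  have hSle : S ≤ (0:ℝ) := min_le_right _ _
  have hcondS : ∀ t, t ≤ S → -α ≤ q t ∧ q t < -α + δ' ∧ |deriv q t| ≤ δ₀ := by
    intro t ht
    have h := hT1 t (le_trans ht (min_le_left _ _))
    exact ⟨(hlow t).le, h.2, by rw [abs_of_pos (hqd_pos t)]; exact h.1⟩
  set dd := CB'⁻¹ with hdddef
  have hddpos : 0 < dd := inv_pos.2 hCB'pos
  have hE2 : ∀ x : ℝ, HasDerivAt (fun s => Real.exp (-(dd * s)) * (q s + α))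
      (Real.exp (-(dd * x)) * -dd * (q x + α) + Real.exp (-(dd * x)) * deriv q x) x := by
    intro x
    have h1 : HasDerivAt (fun s : ℝ => Real.exp (-(dd * s))) (Real.exp (-(dd * x)) * -dd) x := by
      have h := (Real.hasDerivAt_exp (-(dd * x))).comp x (((hasDerivAt_id x).const_mul dd).neg)
      have h' : HasDerivAt (fun s : ℝ => Real.exp (-(dd * s)))
        (Real.exp (-(dd * x)) * -(dd * 1)) x := h
      simpa using h'
    have h2 : HasDerivAt (fun s => q s + α) (deriv q x) x := (hqdiff x).hasDerivAt.add_const α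
    exact h1.mul h2
  have hmonoS : MonotoneOn (fun s => Real.exp (-(dd * s)) * (q s + α)) (Set.Iic S) := by
    apply monotoneOn_of_deriv_nonneg (convex_Iic S)
    · exact ((Real.continuous_exp.comp (continuous_const.mul continuous_id).neg).mul
        (hqdiff.continuous.add continuous_const)).continuousOn
    · intro x _
      exact (hE2 x).differentiableAt.differentiableWithinAt
    · intro x hx
      rw [interior_Iic] at hx
      rw [(hE2 x).deriv]
      have hcond := hcondS x (le_of_lt hx)
      have hHb' := hHb x hcond.1 hcond.2.1 hcond.2.2
      rw [abs_of_pos (hqd_pos x)] at hHb'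
      have hle : dd * (q x + α) ≤ deriv q x := by
        have h := mul_le_mul_of_nonneg_left hHb' hddpos.le
        rwa [hdddef, ← mul_assoc, inv_mul_cancel₀ (ne_of_gt hCB'pos), one_mul] at h
      nlinarith [mul_le_mul_of_nonneg_left (sub_nonpos.2 hle) (Real.exp_pos (-(dd * x))).le]
  have hdecayB : ∀ t, t ≤ S →
      deriv q t ≤ (CB * (q S + α) * Real.exp (-(dd * S))) * Real.exp (dd * t) := by
    intro t ht
    have h1 : Real.exp (-(dd * t)) * (q t + α) ≤ Real.exp (-(dd * S)) * (q S + α) :=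
      hmonoS (Set.mem_Iic.2 ht) (Set.mem_Iic.2 le_rfl) ht
    have h2 := mul_le_mul_of_nonneg_left h1 (Real.exp_pos (dd * t)).le
    rw [← mul_assoc, ← Real.exp_add, add_neg_cancel, Real.exp_zero, one_mul] at h2
    have hcond := hcondS t ht
    have hGb' := hGb t hcond.1 hcond.2.1 hcond.2.2
    rw [abs_of_pos (hqd_pos t)] at hGb'
    calc deriv q t ≤ CB * (q t + α) := hGb'
      _ ≤ CB * (Real.exp (dd * t) * (Real.exp (-(dd * S)) * (q S + α))) :=
          mul_le_mul_of_nonneg_left h2 hCBpos.le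
      _ = (CB * (q S + α) * Real.exp (-(dd * S))) * Real.exp (dd * t) := by ring
  obtain ⟨x₁, hx₁mem, hx₁'⟩ := IsCompact.exists_isMaxOn isCompact_Icc (Set.nonempty_Icc.2 hSle)
    hq'cont.continuousOn
  have hx₁ : ∀ y ∈ Set.Icc S 0, deriv q y ≤ deriv q x₁ := fun y hy => hx₁' hy
  set β₃ := max (deriv q x₁ * Real.exp (-(dd * S)))
    (CB * (q S + α) * Real.exp (-(dd * S))) with hβ₃def
  have hβ₃pos : 0 < β₃ := lt_max_of_lt_left (mul_pos (hqd_pos x₁) (Real.exp_pos _))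
  have hNegSide : ∀ t : ℝ, t ≤ 0 → 0 < deriv q t ∧ deriv q t ≤ β₃ * Real.exp (dd * t) := by
    intro t ht
    refine ⟨hqd_pos t, ?_⟩
    rcases le_total S t with hcase | hcase
    · have h1 : deriv q t ≤ deriv q x₁ := hx₁ t ⟨hcase, ht⟩
      have h2 : Real.exp 0 ≤ Real.exp (-(dd * S)) * Real.exp (dd * t) := by
        rw [← Real.exp_add]
        apply Real.exp_le_exp.2
        nlinarith [mul_nonneg hddpos.le (sub_nonneg.2 hcase)]
      rw [Real.exp_zero] at h2
      calc deriv q t ≤ deriv q x₁ := h1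
        _ = deriv q x₁ * 1 := (mul_one _).symm
        _ ≤ deriv q x₁ * (Real.exp (-(dd * S)) * Real.exp (dd * t)) :=
            mul_le_mul_of_nonneg_left h2 (hqd_pos x₁).le
        _ = (deriv q x₁ * Real.exp (-(dd * S))) * Real.exp (dd * t) := by ring
        _ ≤ β₃ * Real.exp (dd * t) :=
            mul_le_mul_of_nonneg_right (le_max_left _ _) (Real.exp_pos _).le
    · calc deriv q t ≤ (CB * (q S + α) * Real.exp (-(dd * S))) * Real.exp (dd * t) :=
            hdecayB t hcase
        _ ≤ β₃ * Real.exp (dd * t) :=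
            mul_le_mul_of_nonneg_right (le_max_right _ _) (Real.exp_pos _).le
  exact ⟨β₁, cc, β₃, dd, hβ₁pos, hccpos, hβ₃pos, hddpos, hPosSide, hNegSide⟩
end

section
/- Let p ∈ (1,∞), α > 0, φ(t) = t^{p−2} and V(t) = |t² − α²|^p / p. Then the function q(t) = α·tanh(αt/(p−1)^{1/p}) is a heteroclinic solution of problem (P), and every heteroclinic solution of (P) equals q. -/
open Real Filter Set MeasureTheory

lemma hasDerivAt_V {p : ℝ} (hp : 1 < p) (α x : ℝ) :
    HasDerivAt (fun x : ℝ => |x ^ 2 - α ^ 2| ^ p / p)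
      (2 * x * (x ^ 2 - α ^ 2) * |x ^ 2 - α ^ 2| ^ (p - 2)) x := by
  have hp0 : p ≠ 0 := by linarith
  have h1 : HasDerivAt (fun x : ℝ => x ^ 2 - α ^ 2) (2 * x) x := by
    simpa using ((hasDerivAt_pow 2 x).sub_const (α ^ 2))
  have h2 := ((hasDerivAt_abs_rpow (x ^ 2 - α ^ 2) hp).comp x h1).div_const p
  refine h2.congr_deriv ?_
  field_simp

lemma my_hasDerivAt_tanh (x : ℝ) : HasDerivAt Real.tanh (1 / Real.cosh x ^ 2) x := by
  have h := (Real.hasDerivAt_sinh x).div (Real.hasDerivAt_cosh x) (Real.cosh_pos x).ne'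
  have heq : (fun y : ℝ => Real.sinh y / Real.cosh y) = Real.tanh := by
    funext y; rw [Real.tanh_eq_sinh_div_cosh]
  rw [show Real.sinh / Real.cosh = Real.tanh from heq] at h
  refine h.congr_deriv ?_
  have := Real.cosh_sq x
  field_simp
  nlinarith [Real.cosh_sq x]

lemma tanh_lt_one' (x : ℝ) : |Real.tanh x| < 1 := by
  rw [Real.tanh_eq_sinh_div_cosh, abs_div, abs_of_pos (Real.cosh_pos x),
    div_lt_one (Real.cosh_pos x)]
  rcases le_or_gt 0 (Real.sinh x) with h | h
  · rw [abs_of_nonneg h]; exact Real.sinh_lt_cosh x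
  · rw [abs_of_neg h]
    have := Real.sinh_lt_cosh (-x)
    rwa [Real.sinh_neg, Real.cosh_neg] at this

lemma tendsto_tanh_atTop : Tendsto Real.tanh atTop (nhds 1) := by
  have heq : ∀ x : ℝ, Real.tanh x = (1 - Real.exp (-(2 * x))) / (1 + Real.exp (-(2 * x))) := by
    intro x
    rw [Real.tanh_eq_sinh_div_cosh, Real.sinh_eq, Real.cosh_eq]
    have h1 : Real.exp (-(2 * x)) = Real.exp (-x) * Real.exp (-x) := by
      rw [← Real.exp_add]; ring_nf
    have h2 : Real.exp x * Real.exp (-x) = 1 := by rw [← Real.exp_add]; simp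
    have h3 : Real.exp x + Real.exp (-x) ≠ 0 := by positivity
    have h4 : 1 + Real.exp (-(2 * x)) ≠ 0 := by positivity
    field_simp
    rw [mul_comm x 2]
    linear_combination (2 * Real.exp x) * h1 + 2 * Real.exp (-x) * h2
  have hexp : Tendsto (fun x : ℝ => Real.exp (-(2 * x))) atTop (nhds 0) := by
    have h2x : Tendsto (fun x : ℝ => 2 * x) atTop atTop :=
      Tendsto.const_mul_atTop two_pos tendsto_id
    exact Real.tendsto_exp_atBot.comp (tendsto_neg_atTop_atBot.comp h2x)
  have hone : Tendsto (fun _ : ℝ => (1:ℝ)) atTop (nhds 1) := tendsto_const_nhds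
  have := (hone.sub hexp).div (hone.add hexp) (show (1:ℝ) + 0 ≠ 0 by norm_num)
  simp only [sub_zero, add_zero, div_one] at this
  exact Tendsto.congr (fun x => (heq x).symm) this

lemma tendsto_tanh_atBot : Tendsto Real.tanh atBot (nhds (-1)) := by
  have : Tendsto (fun x : ℝ => -Real.tanh (-x)) atBot (nhds (-1)) := by
    exact (tendsto_tanh_atTop.comp tendsto_neg_atBot_atTop).neg
  refine this.congr fun x => ?_
  rw [Real.tanh_neg, neg_neg]

section

variable {p α : ℝ}

lemma c_pow (hp : 1 < p) : (((p - 1) : ℝ) ^ (1 / p)) ^ p = p - 1 := by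
  have hp0 : p ≠ 0 := by linarith
  rw [← Real.rpow_mul (by linarith : (0:ℝ) ≤ p - 1), one_div, inv_mul_cancel₀ hp0,
    Real.rpow_one]

lemma q_hasDerivAt (hp : 1 < p) (hα : 0 < α) (t : ℝ) :
    HasDerivAt (fun t : ℝ => α * Real.tanh (α * t / (p - 1) ^ (1 / p)))
      ((α ^ 2 - (α * Real.tanh (α * t / (p - 1) ^ (1 / p))) ^ 2) / (p - 1) ^ (1 / p)) t := by
  set c : ℝ := (p - 1) ^ (1 / p) with hcdef
  have hc0 : 0 < c := Real.rpow_pos_of_pos (by linarith) _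
  have hinner : HasDerivAt (fun t : ℝ => α * t / c) (α / c) t := by
    simpa using ((hasDerivAt_id t).const_mul α).div_const c
  have h := ((my_hasDerivAt_tanh (α * t / c)).comp t hinner).const_mul α
  have h' : HasDerivAt (fun t : ℝ => α * Real.tanh (α * t / c))
      (α * (1 / Real.cosh (α * t / c) ^ 2 * (α / c))) t := by
    simpa [Function.comp] using h
  convert h' using 1
  set y := α * t / c
  have hcosh := Real.cosh_pos y
  have hsq : Real.cosh y ^ 2 = Real.sinh y ^ 2 + 1 := Real.cosh_sq y
  rw [Real.tanh_eq_sinh_div_cosh]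
  field_simp
  linear_combination hsq

lemma part1 (hp : 1 < p) (hα : 0 < α) :
    IsHeteroclinic (fun t : ℝ => t ^ (p - 2)) (fun t : ℝ => |t ^ 2 - α ^ 2| ^ p / p) α
      (fun t : ℝ => α * Real.tanh (α * t / (p - 1) ^ (1 / p))) := by
  have hp1 : (0:ℝ) < p - 1 := by linarith
  set c : ℝ := (p - 1) ^ (1 / p) with hcdef
  have hc0 : 0 < c := Real.rpow_pos_of_pos hp1 _
  set q : ℝ → ℝ := fun t : ℝ => α * Real.tanh (α * t / c) with hqdef
  have hq' : ∀ t, HasDerivAt q ((α ^ 2 - q t ^ 2) / c) t := q_hasDerivAt hp hα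
  have hqd : Differentiable ℝ q := fun t => (hq' t).differentiableAt
  have hrange : ∀ t, q t ^ 2 < α ^ 2 := by
    intro t
    have h := tanh_lt_one' (α * t / c)
    have h2 : |q t| < α := by
      have : |q t| = α * |Real.tanh (α * t / c)| := by
        rw [hqdef]; simp [abs_mul, abs_of_pos hα]
      rw [this]
      nlinarith [abs_nonneg (Real.tanh (α * t / c))]
    calc q t ^ 2 = |q t| ^ 2 := (sq_abs _).symm
    _ < α ^ 2 := by nlinarith [abs_nonneg (q t)]
  have hpos : ∀ t, 0 < (α ^ 2 - q t ^ 2) / c := fun t => div_pos (by nlinarith [hrange t]) hc0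
  have hderiv : deriv q = fun t => (α ^ 2 - q t ^ 2) / c := funext fun t => (hq' t).deriv
  have hmain : ∀ t : ℝ, HasDerivAt
      (fun s => if deriv q s = 0 then 0 else |deriv q s| ^ (p - 2) * deriv q s)
      (deriv (fun x : ℝ => |x ^ 2 - α ^ 2| ^ p / p) (q t)) t := by
    intro t
    have hfun : (fun s => if deriv q s = 0 then 0 else |deriv q s| ^ (p - 2) * deriv q s)
        = fun s => ((α ^ 2 - q s ^ 2) / c) ^ (p - 1) := by
      funext s
      simp only [hderiv]
      rw [if_neg (ne_of_gt (hpos s)), abs_of_pos (hpos s),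
        show p - 1 = (p - 2) + 1 by ring, Real.rpow_add_one (ne_of_gt (hpos s))]
    rw [hfun]
    have h1 : HasDerivAt (fun s => (α ^ 2 - q s ^ 2) / c)
        (-(2 * q t * ((α ^ 2 - q t ^ 2) / c)) / c) t := by
      have := (((hq' t).pow 2).const_sub (α ^ 2)).div_const c
      refine this.congr_deriv ?_
      ring
    have h2 := h1.rpow_const (p := p - 1) (Or.inl (ne_of_gt (hpos t)))
    convert h2 using 1
    rw [(hasDerivAt_V hp α (q t)).deriv]
    have hA : 0 < α ^ 2 - q t ^ 2 := by nlinarith [hrange t]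
    rw [abs_of_neg (by nlinarith [hrange t] : q t ^ 2 - α ^ 2 < 0)]
    rw [show p - 1 - 1 = p - 2 by ring]
    rw [Real.div_rpow hA.le hc0.le]
    have hcp : c ^ (p - 2) * (c * c) = p - 1 := by
      rw [show c ^ (p-2) * (c * c) = c ^ (p-2) * c * c by ring,
        ← Real.rpow_add_one hc0.ne', ← Real.rpow_add_one hc0.ne',
        show p - 2 + 1 + 1 = p by ring]
      exact c_pow hp
    have hc2 : (0:ℝ) < c ^ (p - 2) := Real.rpow_pos_of_pos hc0 _
    rw [show -(q t ^ 2 - α ^ 2) = α ^ 2 - q t ^ 2 by ring]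
    field_simp
    linear_combination (q t * (q t ^ 2 - α ^ 2)) * hcp
  refine ⟨⟨hqd, hmain⟩, ?_, ?_, ?_, ?_, ?_⟩
  · rw [hderiv]
    exact ((differentiable_const _).sub (hqd.pow 2)).div_const c
  · rw [hderiv]
    exact (((differentiable_const _).sub (hqd.pow 2)).div_const c).continuous
  · simp [hqdef]
  · have hlam : Tendsto (fun t : ℝ => α * t / c) atTop atTop :=
      Tendsto.atTop_div_const hc0 (Tendsto.const_mul_atTop hα tendsto_id)
    have := (tendsto_tanh_atTop.comp hlam).const_mul α
    simpa [Function.comp] using this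
  · have hlam : Tendsto (fun t : ℝ => α * t / c) atBot atBot :=
      Tendsto.atBot_div_const hc0 (Tendsto.const_mul_atBot hα tendsto_id)
    have := (tendsto_tanh_atBot.comp hlam).const_mul α
    have h2 : α * (-1) = -α := by ring
    simpa [Function.comp, h2] using this

end

section Part2

variable {p α : ℝ} {u : ℝ → ℝ}

lemma w_hasDerivAt (hp : 1 < p)
    (hu : IsHeteroclinic (fun t : ℝ => t ^ (p - 2)) (fun t : ℝ => |t ^ 2 - α ^ 2| ^ p / p) α u)
    (t : ℝ) :
    HasDerivAt (fun s => |deriv u s| ^ (p - 2) * deriv u s)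
      (2 * u t * (u t ^ 2 - α ^ 2) * |u t ^ 2 - α ^ 2| ^ (p - 2)) t := by
  have h := hu.1.2 t
  have hfe : (fun s => if deriv u s = 0 then 0 else |deriv u s| ^ (p - 2) * deriv u s)
      = fun s => |deriv u s| ^ (p - 2) * deriv u s := by
    funext s
    split_ifs with hh
    · rw [hh, mul_zero]
    · rfl
  rw [hfe] at h
  rwa [(hasDerivAt_V hp α (u t)).deriv] at h

lemma energy_zero (hp : 1 < p) (hα : 0 < α)
    (hu : IsHeteroclinic (fun t : ℝ => t ^ (p - 2)) (fun t : ℝ => |t ^ 2 - α ^ 2| ^ p / p) α u) :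
    ∀ t : ℝ, (p - 1) * |deriv u t| ^ p = |u t ^ 2 - α ^ 2| ^ p := by
  have hud : Differentiable ℝ u := hu.1.1
  have hp0 : (0:ℝ) < p := by linarith
  have hp1 : (0:ℝ) < p - 1 := by linarith
  set w : ℝ → ℝ := fun s => |deriv u s| ^ (p - 2) * deriv u s with hwdef
  have hw : ∀ t, HasDerivAt w (2 * u t * (u t ^ 2 - α ^ 2) * |u t ^ 2 - α ^ 2| ^ (p - 2)) t :=
    w_hasDerivAt hp hu
  set p' : ℝ := p / (p - 1) with hp'def
  have hp' : 1 < p' := (one_lt_div hp1).2 (by linarith)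
  have habsw : ∀ t, |w t| = |deriv u t| ^ (p - 1) := by
    intro t
    rcases eq_or_ne (deriv u t) 0 with h | h
    · simp [hwdef, h, Real.zero_rpow (show p - 1 ≠ 0 by linarith)]
    · show |_ ^ (p-2) * _| = _
      rw [abs_mul, abs_of_nonneg (Real.rpow_nonneg (abs_nonneg _) _),
        ← Real.rpow_add_one (abs_ne_zero.2 h)]
      ring_nf
  have hwp : ∀ t, |w t| ^ p' = |deriv u t| ^ p := by
    intro t
    rw [habsw, ← Real.rpow_mul (abs_nonneg _)]
    congr 1
    rw [hp'def]
    field_simp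
  set E : ℝ → ℝ := fun t => (p - 1) / p * |w t| ^ p' - |u t ^ 2 - α ^ 2| ^ p / p with hEdef
  have hE' : ∀ t, HasDerivAt E 0 t := by
    intro t
    set D := 2 * u t * (u t ^ 2 - α ^ 2) * |u t ^ 2 - α ^ 2| ^ (p - 2) with hD
    have h1 : HasDerivAt (fun t => |w t| ^ p') (p' * |w t| ^ (p' - 2) * w t * D) t := by
      have h := (hasDerivAt_abs_rpow (w t) hp').comp t (hw t)
      have : p' * |w t| ^ (p' - 2) * w t * D = p' * |w t| ^ (p' - 2) * w t * D := rfl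
      exact h
    have h2 : HasDerivAt (fun t => |u t ^ 2 - α ^ 2| ^ p / p) (D * deriv u t) t := by
      have h := (hasDerivAt_V hp α (u t)).comp t (hud t).hasDerivAt
      exact h
    have key : (p - 1) / p * (p' * |w t| ^ (p' - 2) * w t) = deriv u t := by
      rcases eq_or_ne (deriv u t) 0 with h | h
      · have hw0 : w t = 0 := by simp [hwdef, h]
        rw [hw0, h]; ring
      · have h3 : |w t| ^ (p' - 2) = |deriv u t| ^ ((p - 1) * (p' - 2)) := by
          rw [habsw, Real.rpow_mul (abs_nonneg _)]
        have h4 : (p - 1) * (p' - 2) = 2 - p := by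
          rw [hp'def]; field_simp; ring
        have h6 : (p - 1) / p * p' = 1 := by rw [hp'def]; field_simp
        have h5 : |deriv u t| ^ (2 - p) * (|deriv u t| ^ (p - 2) * deriv u t) = deriv u t := by
          rw [← mul_assoc, ← Real.rpow_add (abs_pos.2 h)]
          norm_num
        calc (p - 1) / p * (p' * |w t| ^ (p' - 2) * w t)
            = ((p - 1) / p * p') * (|w t| ^ (p' - 2) * w t) := by ring
          _ = |w t| ^ (p' - 2) * w t := by rw [h6, one_mul]
          _ = |deriv u t| ^ (2 - p) * (|deriv u t| ^ (p - 2) * deriv u t) := by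
              rw [h3, h4]
          _ = deriv u t := h5
    have hsub := (h1.const_mul ((p - 1) / p)).sub h2
    refine hsub.congr_deriv ?_
    have : (p - 1) / p * (p' * |w t| ^ (p' - 2) * w t * D) - D * deriv u t
        = ((p - 1) / p * (p' * |w t| ^ (p' - 2) * w t) - deriv u t) * D := by ring
    rw [this, key]
    ring
  have hEdiff : Differentiable ℝ E := fun t => (hE' t).differentiableAt
  have hEconst : ∀ t, E t = E 0 := fun t =>
    is_const_of_deriv_eq_zero hEdiff (fun s => (hE' s).deriv) t 0
  have hEeq : ∀ t, E t = (p - 1) / p * |deriv u t| ^ p - |u t ^ 2 - α ^ 2| ^ p / p := by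
    intro t
    rw [hEdef]
    simp only [hwp]
  have hVc : Continuous (fun x : ℝ => |x ^ 2 - α ^ 2| ^ p / p) :=
    Differentiable.continuous (fun x => (hasDerivAt_V hp α x).differentiableAt)
  have hVlim : Tendsto (fun t => |u t ^ 2 - α ^ 2| ^ p / p) atTop (nhds 0) := by
    have h := (hVc.tendsto α).comp hu.2.2.2.2.1
    have hval : |α ^ 2 - α ^ 2| ^ p / p = 0 := by
      simp [Real.zero_rpow (show p ≠ 0 by linarith)]
    rw [hval] at h
    exact h
  have hEtend : Tendsto E atTop (nhds (E 0)) :=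
    Tendsto.congr (fun t => (hEconst t).symm) tendsto_const_nhds
  have hulim' : Tendsto (fun t => |deriv u t| ^ p) atTop (nhds (E 0 * (p / (p - 1)))) := by
    have hfeq : (fun t => |deriv u t| ^ p)
        = fun t => (E t + |u t ^ 2 - α ^ 2| ^ p / p) * (p / (p - 1)) := by
      funext t
      rw [hEeq t]
      field_simp
      ring
    rw [hfeq]
    simpa using (hEtend.add hVlim).mul_const (p / (p - 1))
  set b := E 0 * (p / (p - 1)) with hbdef
  have hb0 : 0 ≤ b :=
    ge_of_tendsto hulim' (Eventually.of_forall fun t => Real.rpow_nonneg (abs_nonneg _) _)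
  have hbz : b = 0 := by
    by_contra hbne
    have hb : 0 < b := lt_of_le_of_ne hb0 (Ne.symm hbne)
    obtain ⟨T, hT⟩ := Filter.eventually_atTop.1
      (hulim'.eventually (eventually_gt_nhds (half_lt_self hb)))
    set m := (b / 2) ^ p⁻¹ with hmdef
    have hm0 : 0 < m := Real.rpow_pos_of_pos (by linarith) _
    have hmp : m ^ p = b / 2 := Real.rpow_inv_rpow (by linarith) (by linarith)
    have hlow : ∀ t, T ≤ t → m < |deriv u t| := by
      intro t ht
      by_contra hle
      push_neg at hle
      have : |deriv u t| ^ p ≤ m ^ p := Real.rpow_le_rpow (abs_nonneg _) hle hp0.le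
      rw [hmp] at this
      linarith [hT t ht]
    have hne : ∀ t, T ≤ t → deriv u t ≠ 0 := by
      intro t ht h
      have := hlow t ht
      rw [h, abs_zero] at this
      linarith
    have hcont : Continuous (deriv u) := hu.2.2.1
    have hsign : (∀ t, T ≤ t → 0 < deriv u t) ∨ (∀ t, T ≤ t → deriv u t < 0) := by
      by_contra hcon
      push_neg at hcon
      obtain ⟨⟨t₁, ht₁, h₁⟩, ⟨t₂, ht₂, h₂⟩⟩ := hcon
      have h₁' : deriv u t₁ ≤ 0 := h₁
      have h₂' : 0 ≤ deriv u t₂ := h₂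
      have hz : (0:ℝ) ∈ uIcc (deriv u t₁) (deriv u t₂) := by
        rw [mem_uIcc]
        left
        exact ⟨h₁', h₂'⟩
      obtain ⟨s, hs, hs0⟩ := intermediate_value_uIcc hcont.continuousOn hz
      have hsT : T ≤ s := le_trans (le_min ht₁ ht₂) hs.1
      exact hne s hsT hs0
    have hub : ∀ᶠ t in atTop, u t < α + 1 :=
      hu.2.2.2.2.1.eventually (eventually_lt_nhds (by linarith))
    have hlb : ∀ᶠ t in atTop, α - 1 < u t :=
      hu.2.2.2.2.1.eventually (eventually_gt_nhds (by linarith))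
    rcases hsign with hsgn | hsgn
    · have hmono : StrictMonoOn (fun t => u t - m * t) (Ici T) := by
        apply strictMonoOn_of_deriv_pos (convex_Ici T)
        · exact (hud.continuous.sub (continuous_const.mul continuous_id)).continuousOn
        · intro x hx
          rw [interior_Ici] at hx
          have hder : deriv (fun t => u t - m * t) x = deriv u x - m := by
            have h' : HasDerivAt (fun t => u t - m * t) (deriv u x - m * 1) x :=
              (hud x).hasDerivAt.sub ((hasDerivAt_id x).const_mul m)
            rw [mul_one] at h'
            exact h'.deriv
          rw [hder]
          have h1 := hlow x (le_of_lt hx)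
          have h2 := hsgn x (le_of_lt hx)
          rw [abs_of_pos h2] at h1
          linarith
      obtain ⟨t₂, ht₂u, ht₂ge⟩ :=
        ((hub.and (eventually_ge_atTop (max (T + 1) ((α + 1 - u T + m * T) / m + 1)))).exists
          : ∃ t₂, u t₂ < α + 1 ∧ max (T + 1) ((α + 1 - u T + m * T) / m + 1) ≤ t₂)
      have hTt₂ : T < t₂ := by
        have := le_trans (le_max_left _ _) ht₂ge
        linarith
      have hmlt : (α + 1 - u T + m * T) < m * t₂ := by
        have h1 : (α + 1 - u T + m * T) / m + 1 ≤ t₂ := le_trans (le_max_right _ _) ht₂ge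
        have h2 : (α + 1 - u T + m * T) / m < t₂ := by linarith
        calc α + 1 - u T + m * T = m * ((α + 1 - u T + m * T) / m) := by field_simp
          _ < m * t₂ := by exact mul_lt_mul_of_pos_left h2 hm0
      have := hmono (self_mem_Ici) (mem_Ici.2 hTt₂.le) hTt₂
      simp only at this
      linarith
    · have hanti : StrictAntiOn (fun t => u t + m * t) (Ici T) := by
        apply strictAntiOn_of_deriv_neg (convex_Ici T)
        · exact (hud.continuous.add (continuous_const.mul continuous_id)).continuousOn
        · intro x hx
          rw [interior_Ici] at hx
          have hder : deriv (fun t => u t + m * t) x = deriv u x + m := by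
            have h' : HasDerivAt (fun t => u t + m * t) (deriv u x + m * 1) x :=
              (hud x).hasDerivAt.add ((hasDerivAt_id x).const_mul m)
            rw [mul_one] at h'
            exact h'.deriv
          rw [hder]
          have h1 := hlow x (le_of_lt hx)
          have h2 := hsgn x (le_of_lt hx)
          rw [abs_of_neg h2] at h1
          linarith
      obtain ⟨t₂, ht₂u, ht₂ge⟩ :=
        ((hlb.and (eventually_ge_atTop (max (T + 1) ((u T + m * T - (α - 1)) / m + 1)))).exists
          : ∃ t₂, α - 1 < u t₂ ∧ max (T + 1) ((u T + m * T - (α - 1)) / m + 1) ≤ t₂)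
      have hTt₂ : T < t₂ := by
        have := le_trans (le_max_left _ _) ht₂ge
        linarith
      have hmlt : (u T + m * T - (α - 1)) < m * t₂ := by
        have h1 : (u T + m * T - (α - 1)) / m + 1 ≤ t₂ := le_trans (le_max_right _ _) ht₂ge
        have h2 : (u T + m * T - (α - 1)) / m < t₂ := by linarith
        calc u T + m * T - (α - 1) = m * ((u T + m * T - (α - 1)) / m) := by field_simp
          _ < m * t₂ := by exact mul_lt_mul_of_pos_left h2 hm0
      have := hanti (self_mem_Ici) (mem_Ici.2 hTt₂.le) hTt₂
      simp only at this
      linarith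
  have hE00 : E 0 = 0 := by
    have hne : p / (p - 1) ≠ 0 := by positivity
    rw [hbdef] at hbz
    rcases mul_eq_zero.1 hbz with h | h
    · exact h
    · exact absurd h hne
  intro t
  have h := hEconst t
  rw [hEeq t, hE00] at h
  have : (p - 1) / p * |deriv u t| ^ p = |u t ^ 2 - α ^ 2| ^ p / p := by linarith
  field_simp at this
  linarith

end Part2

section Part2b

variable {p α : ℝ} {u : ℝ → ℝ}

lemma abs_w (hp : 1 < p) (d : ℝ) : abs (|d| ^ (p - 2) * d) = |d| ^ (p - 1) := by
  rcases eq_or_ne d 0 with h | h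
  · simp [h, Real.zero_rpow (show p - 1 ≠ 0 by intro hh; linarith)]
  · rw [abs_mul, abs_of_nonneg (Real.rpow_nonneg (abs_nonneg _) _),
      ← Real.rpow_add_one (abs_ne_zero.2 h)]
    ring_nf

lemma key_identity (hp : 1 < p) (hα : 0 < α)
    (hu : IsHeteroclinic (fun t : ℝ => t ^ (p - 2)) (fun t : ℝ => |t ^ 2 - α ^ 2| ^ p / p) α u)
    (t : ℝ) :
    |deriv u t| = |u t ^ 2 - α ^ 2| / (p - 1) ^ (1 / p) := by
  have hp1 : (0:ℝ) < p - 1 := by linarith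
  set c : ℝ := (p - 1) ^ (1 / p) with hcdef
  have hc0 : 0 < c := Real.rpow_pos_of_pos hp1 _
  have hcp : c ^ p = p - 1 := c_pow hp
  have h := energy_zero hp hα hu t
  have h2 : |deriv u t| ^ p = (|u t ^ 2 - α ^ 2| / c) ^ p := by
    rw [Real.div_rpow (abs_nonneg _) hc0.le, hcp, eq_div_iff (show p - 1 ≠ 0 by linarith)]
    linarith
  exact (Real.rpow_left_inj (abs_nonneg _) (div_nonneg (abs_nonneg _) hc0.le)
    (show p ≠ 0 by linarith)).1 h2

lemma gronwall_zero_right {f f' g : ℝ → ℝ} {a : ℝ}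
    (hf : ∀ t, HasDerivAt f (f' t) t) (hg : Continuous g)
    (hbound : ∀ t, |f' t| ≤ g t * |f t|) (ha : f a = 0) :
    ∀ b : ℝ, ∀ t ∈ Icc a b, f t = 0 := by
  intro b t ht
  obtain ⟨C, hC⟩ :=
    (isCompact_Icc (a := a) (b := b)).exists_bound_of_continuousOn hg.continuousOn
  have hcont : ContinuousOn f (Icc a b) :=
    (Differentiable.continuous fun s => (hf s).differentiableAt).continuousOn
  have h := norm_le_gronwallBound_of_norm_deriv_right_le (f := f) (f' := f')
    (δ := 0) (K := C) (ε := 0) hcont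
    (fun x _ => (hf x).hasDerivWithinAt) (by simp [ha]) ?_ t ht
  · rw [gronwallBound_ε0_δ0] at h
    exact norm_le_zero_iff.1 h
  · intro x hx
    rw [Real.norm_eq_abs, Real.norm_eq_abs, add_zero]
    calc |f' x| ≤ g x * |f x| := hbound x
      _ ≤ C * |f x| := by
          apply mul_le_mul_of_nonneg_right _ (abs_nonneg _)
          exact le_trans (le_abs_self _) (hC x (Ico_subset_Icc_self hx))

lemma gronwall_zero {f f' g : ℝ → ℝ} {a : ℝ}
    (hf : ∀ t, HasDerivAt f (f' t) t) (hg : Continuous g)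
    (hbound : ∀ t, |f' t| ≤ g t * |f t|) (ha : f a = 0) (t : ℝ) : f t = 0 := by
  rcases le_or_gt a t with h | h
  · exact gronwall_zero_right hf hg hbound ha t t ⟨h, le_rfl⟩
  · set F : ℝ → ℝ := fun s => f (2 * a - s) with hFdef
    have hF : ∀ s, HasDerivAt F (-(f' (2 * a - s))) s := by
      intro s
      have hi : HasDerivAt (fun s : ℝ => 2 * a - s) (-1) s := by
        simpa using (hasDerivAt_id s).const_sub (2 * a)
      have h2 : HasDerivAt F (f' (2 * a - s) * (-1)) s := (hf (2 * a - s)).comp s hi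
      convert h2 using 1
      ring
    have hG : Continuous fun s => g (2 * a - s) := hg.comp (by continuity)
    have hb : ∀ s, |(-(f' (2 * a - s)))| ≤ g (2 * a - s) * |F s| := by
      intro s
      rw [abs_neg]
      exact hbound _
    have hFa : F a = 0 := by
      simp only [hFdef]
      rw [show 2 * a - a = a by ring]
      exact ha
    have := gronwall_zero_right (f := F) hF hG hb hFa (2 * a - t) (2 * a - t)
      ⟨by linarith, le_rfl⟩
    rw [hFdef] at this
    simp only at this
    rwa [show 2 * a - (2 * a - t) = t by ring] at this

lemma deriv_ne_zero (hp : 1 < p) (hα : 0 < α)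
    (hu : IsHeteroclinic (fun t : ℝ => t ^ (p - 2)) (fun t : ℝ => |t ^ 2 - α ^ 2| ^ p / p) α u) :
    ∀ t : ℝ, deriv u t ≠ 0 := by
  have hud : Differentiable ℝ u := hu.1.1
  have hp1 : (0:ℝ) < p - 1 := by linarith
  set c : ℝ := (p - 1) ^ (1 / p) with hcdef
  have hc0 : 0 < c := Real.rpow_pos_of_pos hp1 _
  intro t₀ h0
  set w : ℝ → ℝ := fun s => |deriv u s| ^ (p - 2) * deriv u s with hwdef
  have hw : ∀ t, HasDerivAt w (2 * u t * (u t ^ 2 - α ^ 2) * |u t ^ 2 - α ^ 2| ^ (p - 2)) t :=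
    w_hasDerivAt hp hu
  have hz : w t₀ = 0 := by simp [hwdef, h0]
  have hbound : ∀ t, |2 * u t * (u t ^ 2 - α ^ 2) * |u t ^ 2 - α ^ 2| ^ (p - 2)|
      ≤ (2 * |u t| * c ^ (p - 1)) * |w t| := by
    intro t
    have h1 : |w t| = |deriv u t| ^ (p - 1) := abs_w hp (deriv u t)
    have h0' : (0:ℝ) ≤ 2 * |u t| * c ^ (p - 1) * |w t| := by positivity
    have h2 : |u t ^ 2 - α ^ 2| = c * |deriv u t| := by
      rw [key_identity hp hα hu t, hcdef]
      field_simp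
    have h3 : |(u t ^ 2 - α ^ 2) * |u t ^ 2 - α ^ 2| ^ (p - 2)| = |u t ^ 2 - α ^ 2| ^ (p - 1) := by
      rw [mul_comm]
      exact abs_w hp (u t ^ 2 - α ^ 2)
    refine le_of_eq ?_
    calc |2 * u t * (u t ^ 2 - α ^ 2) * |u t ^ 2 - α ^ 2| ^ (p - 2)|
        = |2 * u t| * |(u t ^ 2 - α ^ 2) * |u t ^ 2 - α ^ 2| ^ (p - 2)| := by
          rw [← abs_mul]; ring_nf
      _ = |2 * u t| * |u t ^ 2 - α ^ 2| ^ (p - 1) := by rw [h3]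
      _ = |2 * u t| * (c ^ (p - 1) * |deriv u t| ^ (p - 1)) := by
          rw [h2, Real.mul_rpow hc0.le (abs_nonneg _)]
      _ = (2 * |u t| * c ^ (p - 1)) * |w t| := by
          rw [h1, abs_mul, abs_two]
          ring
  have hgc : Continuous fun t => 2 * |u t| * c ^ (p - 1) :=
    (continuous_const.mul hud.continuous.abs).mul continuous_const
  have hww : ∀ t, w t = 0 := gronwall_zero hw hgc hbound hz
  have hderiv0 : ∀ t, deriv u t = 0 := by
    intro t
    have h1 : |w t| = 0 := by rw [hww t, abs_zero]
    have h2 : |deriv u t| ^ (p - 1) = 0 := by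
      rw [← abs_w hp (deriv u t)]
      exact h1
    have h3 : |deriv u t| = 0 :=
      ((Real.rpow_eq_zero (abs_nonneg _) (show p - 1 ≠ 0 by linarith)).1 h2)
    exact abs_eq_zero.1 h3
  have hconst : ∀ t, u t = 0 := by
    intro t
    have := is_const_of_deriv_eq_zero hud hderiv0 t 0
    rwa [hu.2.2.2.1] at this
  have htend : Tendsto (fun _ : ℝ => (0:ℝ)) atTop (nhds α) := by
    have h := hu.2.2.2.2.1
    exact h.congr fun t => hconst t
  have : (0:ℝ) = α := tendsto_nhds_unique htend tendsto_const_nhds |>.symm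
  linarith

lemma u_mem_range (hp : 1 < p) (hα : 0 < α)
    (hu : IsHeteroclinic (fun t : ℝ => t ^ (p - 2)) (fun t : ℝ => |t ^ 2 - α ^ 2| ^ p / p) α u) :
    ∀ t : ℝ, -α < u t ∧ u t < α := by
  have hud : Differentiable ℝ u := hu.1.1
  have hne0 := deriv_ne_zero hp hα hu
  have hne : ∀ t, u t ^ 2 ≠ α ^ 2 := by
    intro t h
    apply hne0 t
    have hk := key_identity hp hα hu t
    rw [h, sub_self, abs_zero, zero_div] at hk
    exact abs_eq_zero.1 hk
  have hu0 : u 0 = 0 := hu.2.2.2.1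
  intro t
  constructor
  · by_contra hge
    push_neg at hge
    have hlt : u t < -α := lt_of_le_of_ne hge (by intro h; exact hne t (by rw [h]; ring))
    have hmem : -α ∈ uIcc (u 0) (u t) := by
      rw [hu0, mem_uIcc]
      right
      exact ⟨hlt.le, by linarith⟩
    obtain ⟨s, _, hs⟩ := intermediate_value_uIcc hud.continuous.continuousOn hmem
    exact hne s (by rw [hs]; ring)
  · by_contra hge
    push_neg at hge
    have hlt : α < u t := lt_of_le_of_ne (by linarith) (by intro h; exact hne t (by rw [← h]))
    have hmem : α ∈ uIcc (u 0) (u t) := by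
      rw [hu0, mem_uIcc]
      left
      exact ⟨hα.le, hlt.le⟩
    obtain ⟨s, _, hs⟩ := intermediate_value_uIcc hud.continuous.continuousOn hmem
    exact hne s (by rw [hs])

lemma deriv_u_pos (hp : 1 < p) (hα : 0 < α)
    (hu : IsHeteroclinic (fun t : ℝ => t ^ (p - 2)) (fun t : ℝ => |t ^ 2 - α ^ 2| ^ p / p) α u) :
    ∀ t : ℝ, 0 < deriv u t := by
  have hud : Differentiable ℝ u := hu.1.1
  have hne0 := deriv_ne_zero hp hα hu
  have hcont : Continuous (deriv u) := hu.2.2.1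
  by_contra hcon
  push_neg at hcon
  obtain ⟨t₁, ht₁⟩ := hcon
  have ht₁' : deriv u t₁ < 0 := lt_of_le_of_ne ht₁ (hne0 t₁)
  have hall : ∀ t, deriv u t < 0 := by
    intro t
    rcases lt_or_gt_of_ne (hne0 t) with h | h
    · exact h
    · exfalso
      have hmem : (0:ℝ) ∈ uIcc (deriv u t₁) (deriv u t) := by
        rw [mem_uIcc]
        left
        exact ⟨ht₁'.le, h.le⟩
      obtain ⟨s, _, hs⟩ := intermediate_value_uIcc hcont.continuousOn hmem
      exact hne0 s hs
  have hanti : StrictAnti u := strictAnti_of_deriv_neg hall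
  obtain ⟨t₂, ht₂gt, ht₂pos⟩ :=
    ((hu.2.2.2.2.1.eventually (eventually_gt_nhds (by linarith : α / 2 < α))).and
      (eventually_gt_atTop 0)).exists
  have := hanti ht₂pos
  rw [hu.2.2.2.1] at this
  linarith

end Part2b

theorem statement7 (p α : ℝ) (hp : 1 < p) (hα : 0 < α) :
    IsHeteroclinic (fun t : ℝ => t ^ (p - 2)) (fun t : ℝ => |t ^ 2 - α ^ 2| ^ p / p) α
      (fun t : ℝ => α * Real.tanh (α * t / (p - 1) ^ (1 / p))) ∧
    ∀ u : ℝ → ℝ,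
      IsHeteroclinic (fun t : ℝ => t ^ (p - 2)) (fun t : ℝ => |t ^ 2 - α ^ 2| ^ p / p) α u →
      u = fun t : ℝ => α * Real.tanh (α * t / (p - 1) ^ (1 / p)) := by
  have hp1 : (0:ℝ) < p - 1 := by linarith
  refine ⟨part1 hp hα, ?_⟩
  intro u hu
  set c : ℝ := (p - 1) ^ (1 / p) with hcdef
  have hc0 : 0 < c := Real.rpow_pos_of_pos hp1 _
  set q : ℝ → ℝ := fun t : ℝ => α * Real.tanh (α * t / c) with hqdef
  have hud : Differentiable ℝ u := hu.1.1
  have hupos := deriv_u_pos hp hα hu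
  have hurange := u_mem_range hp hα hu
  have huode : ∀ t, HasDerivAt u ((α ^ 2 - u t ^ 2) / c) t := by
    intro t
    have h := key_identity hp hα hu t
    have hx := hurange t
    have habs : |u t ^ 2 - α ^ 2| = α ^ 2 - u t ^ 2 := by
      rw [abs_of_neg (by nlinarith [hx.1, hx.2] : u t ^ 2 - α ^ 2 < 0)]
      ring
    rw [habs, abs_of_pos (hupos t)] at h
    have hd := (hud t).hasDerivAt
    rwa [h] at hd
  have hq' : ∀ t, HasDerivAt q ((α ^ 2 - q t ^ 2) / c) t := q_hasDerivAt hp hα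
  have hqrange : ∀ t, -α < q t ∧ q t < α := by
    intro t
    have h := tanh_lt_one' (α * t / c)
    rw [abs_lt] at h
    constructor
    · show -α < α * Real.tanh (α * t / c)
      nlinarith [h.1]
    · show α * Real.tanh (α * t / c) < α
      nlinarith [h.2]
  set K : NNReal := Real.toNNReal (2 * α / c) with hKdef
  have hlip : ∀ t : ℝ, LipschitzOnWith K (fun x : ℝ => (α ^ 2 - x ^ 2) / c) (Icc (-α) α) := by
    intro t
    apply LipschitzOnWith.of_dist_le_mul
    intro x hx y hy
    rw [Real.dist_eq, Real.dist_eq]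
    have hK : (K : ℝ) = 2 * α / c := Real.coe_toNNReal _ (by positivity)
    rw [hK]
    have heq : (α ^ 2 - x ^ 2) / c - (α ^ 2 - y ^ 2) / c = ((y + x) * (y - x)) / c := by
      field_simp
      ring
    rw [heq, abs_div, abs_mul, abs_of_pos hc0]
    have h1 : |y + x| ≤ 2 * α := by
      have hx' : |x| ≤ α := abs_le.2 ⟨hx.1, hx.2⟩
      have hy' : |y| ≤ α := abs_le.2 ⟨hy.1, hy.2⟩
      calc |y + x| ≤ |y| + |x| := abs_add_le _ _
        _ ≤ 2 * α := by linarith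
    have h2 : |y - x| = |x - y| := abs_sub_comm _ _
    rw [h2, div_mul_eq_mul_div]
    gcongr
  funext t
  have ht0 : (0:ℝ) ∈ Ioo (-(|t| + 1)) (|t| + 1) := by
    constructor
    · nlinarith [abs_nonneg t]
    · nlinarith [abs_nonneg t]
  have hequ : u 0 = q 0 := by
    rw [hu.2.2.2.1]
    show (0:ℝ) = α * Real.tanh (α * 0 / c)
    simp
  have heqon := ODE_solution_unique_of_mem_Icc
    (v := fun _ x => (α ^ 2 - x ^ 2) / c) (s := fun _ => Icc (-α) α)
    (fun t _ => hlip t) ht0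
    (hud.continuous.continuousOn)
    (fun s _ => huode s)
    (fun s _ => ⟨(hurange s).1.le, (hurange s).2.le⟩)
    ((Differentiable.continuous (fun s => (hq' s).differentiableAt)).continuousOn)
    (fun s _ => hq' s)
    (fun s _ => ⟨(hqrange s).1.le, (hqrange s).2.le⟩)
    hequ
  exact heqon ⟨by nlinarith [neg_abs_le t, abs_nonneg t], by nlinarith [le_abs_self t]⟩
end
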